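/- arXiv:2406.03286 — 4 statements merged into one kernel-verified Lean document; each statement's English description precedes it below -/
import Mathlib

section
/- For every pair (τ,μ) with τ > 0 and μ ∈ (0,1], and every compact set K⁰ ⊂ (ℝ^d)^N, there exist positive constants α, γ > 0 such that D(x(t)) ≤ α D(x(0)) e^{−γ t} for all t ≥ 0 and every solution x(·) of the nonlinear multiagent system with x(0) ∈ K⁰ driven by a signal A(·) ∈ G_η(τ,μ). -/
open MeasureTheory Finset

noncomputable section

/-- Diameter of a configuration of `N` agents in `ℝ^d`. -/
def mDiam {N d : ℕ} (x : Fin N → EuclideanSpace ℝ (Fin d)) : ℝ :=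
  ⨆ i : Fin N, ⨆ j : Fin N, ‖x i - x j‖

/-- Variance of a configuration of `N` agents in `ℝ^d`. -/
def mVar {N d : ℕ} (x : Fin N → EuclideanSpace ℝ (Fin d)) : ℝ :=
  (N : ℝ)⁻¹ * ∑ i : Fin N, ‖x i - (N : ℝ)⁻¹ • ∑ k : Fin N, x k‖ ^ 2

/-- Admissible interaction signals: measurable, valued in `[0,1]` on `[0,∞)`. -/
def ValidSignal (N : ℕ) (a : Fin N → Fin N → ℝ → ℝ) : Prop :=
  ∀ i j, Measurable (a i j) ∧ ∀ t : ℝ, 0 ≤ t → a i j t ∈ Set.Icc (0 : ℝ) 1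

/-- Admissible kernels: locally Lipschitz and positive on `[0,∞)`. -/
def ValidKernel (φ : ℝ → ℝ) : Prop :=
  LocallyLipschitz φ ∧ ∀ r : ℝ, 0 ≤ r → 0 < φ r

/-- Solutions of the nonlinear multiagent system
`ẋ_i(t) = (1/N) ∑_j a_{ij}(t) φ(|x_i(t) − x_j(t)|)(x_j(t) − x_i(t))` for a.e. `t ≥ 0`,
as locally Lipschitz curves on `[0,∞)`. -/
def IsMASol {N d : ℕ} (a : Fin N → Fin N → ℝ → ℝ) (φ : ℝ → ℝ)
    (x : Fin N → ℝ → EuclideanSpace ℝ (Fin d)) : Prop :=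
  (∀ i, ∀ r : ℝ, 0 < r → ∃ K : NNReal, LipschitzOnWith K (x i) (Set.Icc 0 r)) ∧
  (∀ᵐ t ∂(volume : Measure ℝ), 0 ≤ t → ∀ i, HasDerivAt (x i)
    ((N : ℝ)⁻¹ • ∑ j : Fin N, (a i j t * φ ‖x i t - x j t‖) • (x j t - x i t)) t)

/-- The scrambling coefficient of an `N × N` matrix. -/
def scrambling {N : ℕ} (A : Fin N → Fin N → ℝ) : ℝ :=
  ⨅ i : Fin N, ⨅ j : Fin N, (N : ℝ)⁻¹ * ∑ k : Fin N, min (A i k) (A j k)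

/-- Scrambling-persistent signals: the scrambling coefficient of the averaged matrix
over every window `[t, t+τ]` is at least `μ`. -/
def ScramblingPersistent (N : ℕ) (τ μ : ℝ) (a : Fin N → Fin N → ℝ → ℝ) : Prop :=
  ValidSignal N a ∧
  ∀ t : ℝ, 0 ≤ t → μ ≤ scrambling (fun i j => τ⁻¹ * ∫ s in t..t + τ, a i j s)

/-- A matrix is balanced if its in- and out-degrees coincide. -/
def IsBalanced {N : ℕ} (A : Fin N → Fin N → ℝ) : Prop :=
  ∀ i, ∑ j : Fin N, A i j = ∑ j : Fin N, A j i

/-- The algebraic connectivity of a (balanced) matrix: the largest `λ` such that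
`(1/(2N²)) ∑_{ij} a_{ij} |x_i − x_j|² ≥ λ V(x)` for all configurations `x`. -/
def lambda2 (d : ℕ) {N : ℕ} (A : Fin N → Fin N → ℝ) : ℝ :=
  sSup {lam : ℝ | ∀ x : Fin N → EuclideanSpace ℝ (Fin d),
    lam * mVar x ≤ (2 * (N : ℝ) ^ 2)⁻¹ * ∑ i : Fin N, ∑ j : Fin N, A i j * ‖x i - x j‖ ^ 2}

/-- Connectivity-persistent balanced signals. -/
def ConnectivityPersistent (N d : ℕ) (τ μ : ℝ) (a : Fin N → Fin N → ℝ → ℝ) : Prop :=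
  ValidSignal N a ∧
  (∀ᵐ t ∂(volume : Measure ℝ), 0 ≤ t → IsBalanced (fun i j => a i j t)) ∧
  ∀ t : ℝ, 0 ≤ t → μ ≤ lambda2 d (fun i j => τ⁻¹ * ∫ s in t..t + τ, a i j s)

/-- Solutions of the linear multiagent system
`ẋ_i(t) = (1/N) ∑_j a_{ij}(t) (x_j(t) − x_i(t))` for a.e. `t ≥ 0`. -/
def IsLinSol {N d : ℕ} (a : Fin N → Fin N → ℝ → ℝ)
    (x : Fin N → ℝ → EuclideanSpace ℝ (Fin d)) : Prop :=
  (∀ i, ∀ r : ℝ, 0 < r → ∃ K : NNReal, LipschitzOnWith K (x i) (Set.Icc 0 r)) ∧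
  (∀ᵐ t ∂(volume : Measure ℝ), 0 ≤ t → ∀ i, HasDerivAt (x i)
    ((N : ℝ)⁻¹ • ∑ j : Fin N, a i j t • (x j t - x i t)) t)


open MeasureTheory Set Filter Topology

lemma slope_barrier {f : ℝ → ℝ} {a b L : ℝ} (hab : a ≤ b)
    (hf : ContinuousOn f (Set.Icc a b))
    (hslope : ∀ x ∈ Set.Ico a b, ∀ z ∈ Set.Ioc x b, slope f x z ≤ L)
    {E : Set ℝ} (hE : volume E = 0)
    (hgood : ∀ x ∈ Set.Ico a b, x ∉ E → ∀ r : ℝ, 0 < r →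
      ∀ᶠ z in 𝓝[>] x, slope f x z < r) :
    f b ≤ f a := by
  rcases eq_or_lt_of_le hab with rfl | hab'
  · exact le_refl _
  refine le_of_forall_pos_le_add (fun ε hε => ?_)
  set C : ℝ := max L 0 + 1 with hC
  have hC1 : (1:ℝ) ≤ C := by simp only [hC]; linarith [le_max_right L 0]
  have hC0 : (0:ℝ) < C := by linarith
  set ε' : ℝ := ε / (2 * C) with hε'
  have hε'0 : 0 < ε' := by positivity
  set η : ℝ := ε / (2 * (b - a)) with hη
  have hη0 : 0 < η := by have : 0 < b - a := by linarith
                         positivity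
  -- choose an open set of small measure containing the bad set
  obtain ⟨U, hEU, hUopen, hUvol⟩ :=
    Set.exists_isOpen_lt_of_lt (μ := (volume : Measure ℝ)) (E ∩ Icc a b) (ENNReal.ofReal ε')
      (by
        have : volume (E ∩ Icc a b) = 0 :=
          measure_mono_null inter_subset_left hE
        rw [this]
        exact ENNReal.ofReal_pos.2 hε'0)
  set w : ℝ → ℝ := fun t => (volume (U ∩ Ioc a t)).toReal with hw
  have hfin : ∀ t, volume (U ∩ Ioc a t) ≠ ⊤ := by
    intro t
    exact ((measure_mono inter_subset_left).trans_lt (hUvol.trans_le le_top)).ne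
  have hsplit : ∀ x z : ℝ, a ≤ x → x ≤ z →
      w z - w x = (volume (U ∩ Ioc x z)).toReal := by
    intro x z hax hxz
    have h1 : Ioc a x ∪ Ioc x z = Ioc a z := Set.Ioc_union_Ioc_eq_Ioc hax hxz
    have h2 : U ∩ Ioc a z = (U ∩ Ioc a x) ∪ (U ∩ Ioc x z) := by
      rw [← h1, Set.inter_union_distrib_left]
    have hdisj : Disjoint (U ∩ Ioc a x) (U ∩ Ioc x z) :=
      (Set.Ioc_disjoint_Ioc_of_le le_rfl).mono Set.inter_subset_right Set.inter_subset_right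
    have := measure_union (μ := (volume : Measure ℝ)) hdisj (hUopen.measurableSet.inter measurableSet_Ioc)
    rw [← h2] at this
    have hfx := hfin x
    have hfz : volume (U ∩ Ioc x z) ≠ ⊤ := by
      refine ((measure_mono Set.inter_subset_left).trans_lt (hUvol.trans_le le_top)).ne
    rw [hw]
    simp only
    rw [this, ENNReal.toReal_add hfx hfz]
    ring
  have hwmono : ∀ x z : ℝ, a ≤ x → x ≤ z → 0 ≤ w z - w x := by
    intro x z hax hxz
    rw [hsplit x z hax hxz]; positivity
  have hwlip : ∀ x z : ℝ, a ≤ x → x ≤ z → w z - w x ≤ z - x := by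
    intro x z hax hxz
    rw [hsplit x z hax hxz]
    have : volume (U ∩ Ioc x z) ≤ ENNReal.ofReal (z - x) := by
      refine (measure_mono Set.inter_subset_right).trans ?_
      rw [Real.volume_Ioc]
    calc (volume (U ∩ Ioc x z)).toReal ≤ (ENNReal.ofReal (z - x)).toReal :=
          ENNReal.toReal_mono ENNReal.ofReal_ne_top this
      _ ≤ z - x := by rw [ENNReal.toReal_ofReal (by linarith)]
  have hwcont : ContinuousOn w (Icc a b) := by
    refine (LipschitzOnWith.of_dist_le_mul (K := 1) ?_).continuousOn
    intro x hx y hy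
    rw [NNReal.coe_one, one_mul, Real.dist_eq, Real.dist_eq]
    rcases le_total x y with h | h
    · rw [abs_of_nonpos (by linarith [hwmono x y hx.1 h]), abs_of_nonpos (by linarith)]
      have := hwlip x y hx.1 h; linarith
    · rw [abs_of_nonneg (by linarith [hwmono y x hy.1 h]), abs_of_nonneg (by linarith)]
      have := hwlip y x hy.1 h; linarith
  set F : ℝ → ℝ := fun t => f t - C * w t with hF
  have key : ∀ ⦃t⦄, t ∈ Icc a b → F t ≤ F a + η * (t - a) := by
    refine image_le_of_liminf_slope_right_lt_deriv_boundary (f := F)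
      (f' := fun _ => (0:ℝ)) (B' := fun _ => η)
      (hf.sub (continuousOn_const.mul hwcont)) ?_ (by simp)
      (fun x => by simpa using (((hasDerivAt_id x).sub_const a).const_mul η).const_add (F a)) ?_
    · intro x hx r hr
      have hxb : x < b := hx.2
      have hslopeF : ∀ z, x < z → z ≤ b →
          slope F x z = slope f x z - C * slope w x z := by
        intro z hxz hzb
        simp only [hF, slope_def_field]
        field_simp
        ring
      by_cases hxE : x ∈ E
      · -- bad point: inside U, the penalty dominates
        have hxU : x ∈ U := hEU ⟨hxE, hx.1, hx.2.le⟩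
        obtain ⟨δ, hδ0, hδU⟩ := Metric.isOpen_iff.1 hUopen x hxU
        have hmem : Ioo x (min (x + δ) b) ∈ 𝓝[>] x :=
          Ioo_mem_nhdsGT_of_mem ⟨le_rfl, lt_min (by linarith) hxb⟩
        refine (eventually_of_mem hmem ?_).frequently
        intro z hz
        have hxz : x < z := hz.1
        have hzb : z ≤ b := (hz.2.trans_le (min_le_right _ _)).le
        have hsub : Ioc x z ⊆ U := by
          intro u hu
          apply hδU
          rw [Metric.mem_ball, Real.dist_eq, abs_of_pos (by linarith [hu.1])]
          have : z < x + δ := hz.2.trans_le (min_le_left _ _)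
          linarith [hu.2, hu.1]
        have hwz : w z - w x = z - x := by
          rw [hsplit x z hx.1 hxz.le, Set.inter_eq_self_of_subset_right hsub,
            Real.volume_Ioc, ENNReal.toReal_ofReal (by linarith)]
        have hswz : slope w x z = 1 := by
          rw [slope_def_field]
          rw [div_eq_one_iff_eq (by linarith : z - x ≠ 0)]
          linarith [hwz]
        rw [hslopeF z hxz hzb, hswz]
        have hsf : slope f x z ≤ L := hslope x hx z ⟨hxz, hzb⟩
        have : L ≤ max L 0 := le_max_left _ _
        have hr' : (0:ℝ) < r := hr
        calc slope f x z - C * 1 ≤ max L 0 - C := by linarith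
          _ = -1 := by rw [hC]; ring
          _ < r := by linarith [hr']
      · -- good point
        have hev := hgood x hx hxE r hr
        have hmem : Ioo x b ∈ 𝓝[>] x := Ioo_mem_nhdsGT_of_mem ⟨le_rfl, hxb⟩
        refine ((hev.and (eventually_of_mem hmem (fun z hz => hz))).mono ?_).frequently
        rintro z ⟨hfz, hz⟩
        rw [hslopeF z hz.1 hz.2.le]
        have h1 : 0 ≤ slope w x z := by
          rw [slope_def_field]
          exact div_nonneg (hwmono x z hx.1 hz.1.le) (by linarith [hz.1])
        nlinarith
    · intro x _ _
      exact hη0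
  have hFb := key (right_mem_Icc.2 hab)
  have hwa : w a = 0 := by
    rw [hw]; simp
  have hwb : w b ≤ ε' := by
    have : volume (U ∩ Ioc a b) ≤ ENNReal.ofReal ε' :=
      (measure_mono Set.inter_subset_left).trans hUvol.le
    calc w b ≤ (ENNReal.ofReal ε').toReal :=
          ENNReal.toReal_mono ENNReal.ofReal_ne_top this
      _ = ε' := ENNReal.toReal_ofReal hε'0.le
  have hCε : C * ε' = ε / 2 := by
    rw [hε']; field_simp
  have hba : b - a ≠ 0 := by linarith
  have hηb : η * (b - a) = ε / 2 := by
    rw [hη]; field_simp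
  have h1 : C * w b ≤ C * ε' := mul_le_mul_of_nonneg_left hwb hC0.le
  simp only [hF] at hFb
  rw [hwa, mul_zero, sub_zero] at hFb
  clear_value C ε' η w F
  linarith [hFb, hηb, h1, hCε]
open MeasureTheory Set Filter Topology

lemma slope_sub_fun (f g : ℝ → ℝ) (x z : ℝ) :
    slope (fun t => f t - g t) x z = slope f x z - slope g x z := by
  simp only [slope_def_field]
  rw [← sub_div]
  ring_nf

lemma integral_le_sub_of_ae_deriv {f g : ℝ → ℝ} {a b C L : ℝ} (hab : a ≤ b)
    (hf : ∀ x ∈ Set.Icc a b, ∀ z ∈ Set.Icc a b, |f z - f x| ≤ L * |z - x|)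
    (hg : Measurable g) (hgC : ∀ t ∈ Set.Icc a b, |g t| ≤ C)
    (hae : ∀ᵐ t ∂(volume : Measure ℝ), t ∈ Set.Ioo a b →
      ∃ d : ℝ, HasDerivAt f d t ∧ g t ≤ d) :
    ∫ t in a..b, g t ≤ f b - f a := by
  rcases eq_or_lt_of_le hab with rfl | hab'
  · simp
  have hC0 : 0 ≤ C := (abs_nonneg _).trans (hgC a (left_mem_Icc.2 hab))
  set g' : ℝ → ℝ := (Set.Icc a b).indicator g with hg'def
  have hg'meas : Measurable g' := hg.indicator measurableSet_Icc
  have hg'C : ∀ t, |g' t| ≤ C := by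
    intro t
    rw [hg'def]
    by_cases ht : t ∈ Set.Icc a b
    · rw [Set.indicator_of_mem ht]; exact hgC t ht
    · rw [Set.indicator_of_notMem ht]; simpa using hC0
  have hg'int : Integrable g' (volume : Measure ℝ) := by
    have h1 : IntegrableOn g (Set.Icc a b) (volume : Measure ℝ) := by
      refine Integrable.mono' (integrable_const C) hg.aestronglyMeasurable.restrict ?_
      rw [ae_restrict_iff' measurableSet_Icc]
      exact Eventually.of_forall (fun t ht => by simpa [Real.norm_eq_abs] using hgC t ht)
    exact (integrable_indicator_iff measurableSet_Icc).2 h1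
  set G : ℝ → ℝ := fun t => ∫ s in a..t, g' s with hGdef
  have hGsub : ∀ x z : ℝ, G z - G x = ∫ s in x..z, g' s := by
    intro x z
    have h1 := intervalIntegral.integral_add_adjacent_intervals (a := a) (b := x) (c := z)
      (μ := (volume : Measure ℝ)) (f := g')
      hg'int.intervalIntegrable hg'int.intervalIntegrable
    rw [hGdef]
    simp only
    linarith [h1]
  have hGslope : ∀ x z : ℝ, x < z → |slope G x z| ≤ C := by
    intro x z hxz
    rw [slope_def_field, hGsub x z, abs_div, abs_of_pos (by linarith : (0:ℝ) < z - x),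
      div_le_iff₀ (by linarith : (0:ℝ) < z - x)]
    calc |∫ s in x..z, g' s| ≤ C * |z - x| := by
          simpa [Real.norm_eq_abs] using
            intervalIntegral.norm_integral_le_of_norm_le_const (a := x) (b := z) (C := C)
              (f := g') (fun s _ => by simpa [Real.norm_eq_abs] using hg'C s)
      _ = C * (z - x) := by rw [abs_of_pos (by linarith)]
  -- Lebesgue differentiation
  have hLeb : ∀ᵐ x ∂(volume : Measure ℝ),
      Tendsto (fun z => slope G x z) (𝓝[>] x) (𝓝 (g' x)) := by
    have h0 := VitaliFamily.ae_tendsto_average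
        (v := IsUnifLocDoublingMeasure.vitaliFamily (volume : Measure ℝ) 1) hg'int.locallyIntegrable
    filter_upwards [h0] with x hx
    have h1 : Tendsto (fun z => ⨍ y in Set.Icc x z, g' y) (𝓝[>] x) (𝓝 (g' x)) :=
      hx.comp (Real.tendsto_Icc_vitaliFamily_right x)
    refine h1.congr' ?_
    filter_upwards [self_mem_nhdsWithin] with z hz
    have hxz : x < z := hz
    rw [setAverage_eq, slope_def_field, hGsub x z,
      intervalIntegral.integral_of_le hxz.le, Real.volume_real_Icc,
      ← integral_Icc_eq_integral_Ioc, smul_eq_mul,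
      max_eq_left (by linarith), div_eq_inv_mul]
  -- the barrier argument applied to F = G - f
  have hfcont : ContinuousOn f (Set.Icc a b) := by
    refine (LipschitzOnWith.of_dist_le_mul (K := L.toNNReal) ?_).continuousOn
    intro p hp q hq
    rw [Real.dist_eq, Real.dist_eq]
    calc |f p - f q| ≤ L * |p - q| := hf q hq p hp
      _ ≤ L.toNNReal * |p - q| :=
        mul_le_mul_of_nonneg_right (Real.le_coe_toNNReal L) (abs_nonneg _)
  set F : ℝ → ℝ := fun t => G t - f t with hFdef
  have hFcont : ContinuousOn F (Set.Icc a b) := by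
    have hGcont : Continuous G := by
      exact intervalIntegral.continuous_primitive (fun _ _ => hg'int.intervalIntegrable) a
    exact hGcont.continuousOn.sub hfcont
  have hFslope : ∀ x ∈ Set.Ico a b, ∀ z ∈ Set.Ioc x b, slope F x z ≤ C + L := by
    intro x hx z hz
    rw [hFdef]
    have h1 := hGslope x z hz.1
    have h2 : |f z - f x| ≤ L * (z - x) := by
      have := hf x ⟨hx.1, hx.2.le⟩ z ⟨hx.1.trans hz.1.le, hz.2⟩
      rwa [abs_of_pos (by linarith [hz.1] : (0:ℝ) < z - x)] at this
    have h3 : slope f x z ≥ -(L : ℝ) := by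
      rw [slope_def_field, ge_iff_le, neg_le, ← neg_div,
        div_le_iff₀ (by linarith [hz.1] : (0:ℝ) < z - x)]
      calc -(f z - f x) ≤ |f z - f x| := neg_le_abs _
        _ ≤ L * (z - x) := h2
    rw [slope_sub_fun]
    have := abs_le.1 h1
    linarith [this.2]
  -- the exceptional set
  set Egood : Set ℝ := {t | (t ∈ Set.Ioo a b → ∃ d : ℝ, HasDerivAt f d t ∧ g t ≤ d) ∧
      Tendsto (fun z => slope G t z) (𝓝[>] t) (𝓝 (g' t))} with hEgood
  have hEnull : volume ({a} ∪ Egoodᶜ) = 0 := by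
    refine measure_union_null (by simp) ?_
    have h : ∀ᵐ t ∂(volume : Measure ℝ), t ∈ Egood := by
      filter_upwards [hae, hLeb] with t h1 h2 using ⟨h1, h2⟩
    exact ae_iff.1 h
  have hgood : ∀ x ∈ Set.Ico a b, x ∉ ({a} ∪ Egoodᶜ) → ∀ r : ℝ, 0 < r →
      ∀ᶠ z in 𝓝[>] x, slope F x z < r := by
    intro x hx hxE r hr
    have hxa : x ≠ a := fun h => hxE (Or.inl (by simp [h]))
    have hxEg : x ∈ Egood := by
      by_contra h; exact hxE (Or.inr h)
    obtain ⟨h1, h2⟩ := hxEg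
    obtain ⟨d, hd, hgd⟩ := h1 ⟨lt_of_le_of_ne hx.1 (Ne.symm hxa), hx.2⟩
    have hslopef : Tendsto (fun z => slope f x z) (𝓝[>] x) (𝓝 d) :=
      (hasDerivAt_iff_tendsto_slope.1 hd).mono_left
        (nhdsWithin_mono x (fun z hz => ne_of_gt hz))
    have hTend : Tendsto (fun z => slope F x z) (𝓝[>] x) (𝓝 (g' x - d)) := by
      refine Tendsto.congr (fun z => (slope_sub_fun G f x z).symm) (h2.sub hslopef)
    have hgx : g' x = g x := by
      rw [hg'def, Set.indicator_of_mem (Set.mem_Icc_of_Ico hx)]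
    have hlt : g' x - d < r := by rw [hgx]; linarith
    exact hTend.eventually (tendsto_id.eventually_lt_const hlt) |>.mono (fun z hz => hz)
  have hFb : F b ≤ F a :=
    slope_barrier hab'.le hFcont hFslope hEnull hgood
  have hGa : G a = 0 := by rw [hGdef]; simp
  have hint : ∫ t in a..b, g t = G b := by
    rw [hGdef]
    refine (intervalIntegral.integral_congr (fun t ht => ?_)).symm
    rw [Set.uIcc_of_le hab] at ht
    rw [hg'def, Set.indicator_of_mem ht]
  rw [hint]
  simp only [hFdef] at hFb
  linarith

/-- a.e.-derivative version of "nonnegative derivative implies monotone". -/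
lemma le_of_ae_deriv_nonneg {f : ℝ → ℝ} {a b L : ℝ} (hab : a ≤ b)
    (hf : ∀ x ∈ Set.Icc a b, ∀ z ∈ Set.Icc a b, |f z - f x| ≤ L * |z - x|)
    (hae : ∀ᵐ t ∂(volume : Measure ℝ), t ∈ Set.Ioo a b →
      ∃ d : ℝ, HasDerivAt f d t ∧ 0 ≤ d) :
    f a ≤ f b := by
  have := integral_le_sub_of_ae_deriv (g := fun _ => (0:ℝ)) (C := 0) hab hf
    measurable_const (by simp) (by filter_upwards [hae] with t ht h using ht h)
  simpa using this
open MeasureTheory Set Filter Topology Finset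

local notation "⟪" x ", " y "⟫" => @inner ℝ _ _ x y

lemma inner_smul_sum_eq {N d : ℕ} (v : EuclideanSpace ℝ (Fin d)) (cf : Fin N → ℝ)
    (xs : Fin N → EuclideanSpace ℝ (Fin d)) :
    (⟪v, (N:ℝ)⁻¹ • ∑ j, cf j • xs j⟫ : ℝ) = (N:ℝ)⁻¹ * ∑ j, cf j * (⟪v, xs j⟫ : ℝ) := by
  rw [real_inner_smul_right, inner_sum]
  congr 1
  exact Finset.sum_congr rfl (fun j _ => real_inner_smul_right _ _ _)

section M1

variable {N d : ℕ} [NeZero N]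

lemma dirmax_antitone
    (x : Fin N → ℝ → EuclideanSpace ℝ (Fin d))
    (c : Fin N → Fin N → ℝ → ℝ)
    (hlip : ∀ i, ∀ r : ℝ, 0 < r → ∃ K : NNReal, LipschitzOnWith K (x i) (Set.Icc 0 r))
    (hc : ∀ t : ℝ, 0 ≤ t → ∀ i j, 0 ≤ c i j t)
    (hae : ∀ᵐ t ∂(volume : Measure ℝ), 0 ≤ t → ∀ i, HasDerivAt (x i)
      ((N:ℝ)⁻¹ • ∑ j, (c i j t) • (x j t - x i t)) t)
    (v : EuclideanSpace ℝ (Fin d)) {s t : ℝ} (hs : 0 ≤ s) (hst : s ≤ t) :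
    Finset.univ.sup' Finset.univ_nonempty (fun i => (⟪v, x i t⟫ : ℝ)) ≤
    Finset.univ.sup' Finset.univ_nonempty (fun i => (⟪v, x i s⟫ : ℝ)) := by
  set f : ℝ → ℝ := fun u => Finset.univ.sup' Finset.univ_nonempty
    (fun i => (⟪v, x i u⟫ : ℝ)) with hfdef
  -- uniform Lipschitz data on [0, t+1]
  have htpos : (0:ℝ) < t + 1 := by linarith
  choose K hK using fun i => hlip i (t+1) htpos
  set Km : NNReal := Finset.univ.sup K with hKm
  have hKlip : ∀ i, ∀ p ∈ Set.Icc (0:ℝ) (t+1), ∀ q ∈ Set.Icc (0:ℝ) (t+1),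
      dist (x i p) (x i q) ≤ (Km : ℝ) * dist p q := by
    intro i p hp q hq
    refine ((hK i).dist_le_mul p hp q hq).trans
      (mul_le_mul_of_nonneg_right ?_ dist_nonneg)
    exact_mod_cast NNReal.coe_le_coe.2 (Finset.le_sup (Finset.mem_univ i))
  set L : ℝ := ‖v‖ * Km with hL
  have hL0 : 0 ≤ L := mul_nonneg (norm_nonneg _) Km.2
  have hsub : Set.Icc s t ⊆ Set.Icc 0 (t+1) :=
    Set.Icc_subset_Icc hs (by linarith)
  have hydiff : ∀ i, ∀ u ∈ Set.Icc s t, ∀ z ∈ Set.Icc s t,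
      |(⟪v, x i z⟫ : ℝ) - ⟪v, x i u⟫| ≤ L * |z - u| := by
    intro i u hu z hz
    rw [← inner_sub_right]
    refine (abs_real_inner_le_norm _ _).trans ?_
    rw [hL, mul_assoc]
    refine mul_le_mul_of_nonneg_left ?_ (norm_nonneg v)
    have := hKlip i z (hsub hz) u (hsub hu)
    rwa [dist_eq_norm, Real.dist_eq] at this
  have hfslope : ∀ u ∈ Set.Icc s t, ∀ z ∈ Set.Icc s t, |f z - f u| ≤ L * |z - u| := by
    have key : ∀ u ∈ Set.Icc s t, ∀ z ∈ Set.Icc s t, f z - f u ≤ L * |z - u| := by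
      intro u hu z hz
      obtain ⟨i, _, hi⟩ := Finset.exists_mem_eq_sup' Finset.univ_nonempty
        (fun i => (⟪v, x i z⟫ : ℝ))
      have h1 : f z = ⟪v, x i z⟫ := hi
      have h2 : (⟪v, x i u⟫ : ℝ) ≤ f u :=
        Finset.le_sup' (fun i => (⟪v, x i u⟫ : ℝ)) (Finset.mem_univ i)
      have h3 := (abs_le.1 (hydiff i u hu z hz)).2
      linarith
    intro u hu z hz
    rw [abs_le]
    constructor
    · have := key z hz u hu
      rw [abs_sub_comm] at this
      linarith
    · exact key u hu z hz
  have hfcont : ContinuousOn f (Set.Icc s t) := by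
    refine (LipschitzOnWith.of_dist_le_mul (K := L.toNNReal) ?_).continuousOn
    intro p hp q hq
    rw [Real.dist_eq, Real.dist_eq]
    exact (hfslope q hq p hp).trans
      (mul_le_mul_of_nonneg_right (Real.le_coe_toNNReal L) (abs_nonneg _))
  set E : Set ℝ := {u | ¬ (0 ≤ u → ∀ i, HasDerivAt (x i)
      ((N:ℝ)⁻¹ • ∑ j, (c i j u) • (x j u - x i u)) u)} with hEdef
  have hEnull : volume E = 0 := ae_iff.1 hae
  have hbslope : ∀ u ∈ Set.Ico s t, ∀ z ∈ Set.Ioc u t, slope f u z ≤ L := by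
    intro u hu z hz
    rw [slope_def_field, div_le_iff₀ (by linarith [hz.1] : (0:ℝ) < z - u)]
    have := (abs_le.1 (hfslope u ⟨hu.1, hu.2.le⟩ z ⟨hu.1.trans hz.1.le, hz.2⟩)).2
    rw [abs_of_pos (by linarith [hz.1] : (0:ℝ) < z - u)] at this
    linarith
  have hgood : ∀ u ∈ Set.Ico s t, u ∉ E → ∀ r : ℝ, 0 < r →
      ∀ᶠ z in 𝓝[>] u, slope f u z < r := by
    intro u hu huE r hr
    have hu0 : 0 ≤ u := hs.trans hu.1
    have hder : ∀ i, HasDerivAt (x i)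
        ((N:ℝ)⁻¹ • ∑ j, (c i j u) • (x j u - x i u)) u := by
      have h' : ¬¬(0 ≤ u → ∀ i, HasDerivAt (x i)
          ((N:ℝ)⁻¹ • ∑ j, (c i j u) • (x j u - x i u)) u) := by
        simpa [hEdef] using huE
      exact (not_not.1 h') hu0
    have hyder : ∀ i, HasDerivAt (fun w => (⟪v, x i w⟫ : ℝ))
        ((N:ℝ)⁻¹ * ∑ j, c i j u * ((⟪v, x j u⟫ : ℝ) - ⟪v, x i u⟫)) u := by
      intro i
      have h0 := HasDerivAt.inner ℝ (hasDerivAt_const u v) (hder i)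
      refine h0.congr_deriv ?_
      rw [inner_zero_left, add_zero, inner_smul_sum_eq]
      congr 1
      refine Finset.sum_congr rfl (fun j _ => ?_)
      rw [inner_sub_right]
    have hev : ∀ i : Fin N, ∀ᶠ z in 𝓝[>] u, (⟪v, x i z⟫ : ℝ) < f u + r * (z - u) := by
      intro i
      by_cases hcase : (⟪v, x i u⟫ : ℝ) = f u
      · have hdi : (N:ℝ)⁻¹ * ∑ j, c i j u * ((⟪v, x j u⟫ : ℝ) - ⟪v, x i u⟫) ≤ 0 := by
          refine mul_nonpos_of_nonneg_of_nonpos (by positivity) ?_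
          refine Finset.sum_nonpos (fun j _ => ?_)
          refine mul_nonpos_of_nonneg_of_nonpos (hc u hu0 i j) ?_
          have : (⟪v, x j u⟫ : ℝ) ≤ f u :=
            Finset.le_sup' (fun i => (⟪v, x i u⟫ : ℝ)) (Finset.mem_univ j)
          linarith [hcase]
        have hts : Tendsto (slope (fun w => (⟪v, x i w⟫ : ℝ)) u) (𝓝[>] u)
            (𝓝 ((N:ℝ)⁻¹ * ∑ j, c i j u * ((⟪v, x j u⟫ : ℝ) - ⟪v, x i u⟫))) :=
          (hasDerivAt_iff_tendsto_slope.1 (hyder i)).mono_left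
            (nhdsWithin_mono _ (fun z hz => ne_of_gt hz))
        have hev1 : ∀ᶠ z in 𝓝[>] u,
            slope (fun w => (⟪v, x i w⟫ : ℝ)) u z < r :=
          hts.eventually_lt_const (by linarith)
        filter_upwards [hev1, self_mem_nhdsWithin] with z hz1 hz2
        have hzu : u < z := hz2
        rw [slope_def_field, div_lt_iff₀ (by linarith)] at hz1
        have := hcase
        nlinarith
      · have hle : (⟪v, x i u⟫ : ℝ) ≤ f u :=
          Finset.le_sup' (fun i => (⟪v, x i u⟫ : ℝ)) (Finset.mem_univ i)
        have hlt : (⟪v, x i u⟫ : ℝ) < f u := lt_of_le_of_ne hle hcase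
        set gap : ℝ := (f u - ⟪v, x i u⟫) / (L + 1) with hgap
        have hgap0 : 0 < gap := div_pos (by linarith) (by linarith)
        have hmem : Set.Ioo u (min (u + gap) t) ∈ 𝓝[>] u :=
          Ioo_mem_nhdsGT_of_mem ⟨le_rfl, lt_min (by linarith) hu.2⟩
        filter_upwards [eventually_of_mem hmem (fun z hz => hz)] with z hz
        have hz2 : z ≤ t := (hz.2.trans_le (min_le_right _ _)).le
        have h1 := (abs_le.1 (hydiff i u ⟨hu.1, hu.2.le⟩ z
          ⟨hu.1.trans hz.1.le, hz2⟩)).2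
        have h2 : z - u < gap := by
          have := hz.2.trans_le (min_le_left _ _); linarith [hz.1]
        have h3 : (L+1) * gap = f u - ⟪v, x i u⟫ := by
          rw [hgap]; field_simp
        rw [abs_of_pos (by linarith [hz.1] : (0:ℝ) < z - u)] at h1
        nlinarith [hz.1]
    filter_upwards [Filter.eventually_all.2 hev, self_mem_nhdsWithin] with z hz hzu
    have hzu' : u < z := hzu
    have hfz : f z < f u + r * (z - u) := by
      rw [hfdef]
      exact (Finset.sup'_lt_iff Finset.univ_nonempty).2 (fun i _ => hz i)
    rw [slope_def_field, div_lt_iff₀ (by linarith)]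
    linarith
  exact slope_barrier hst hfcont hbslope hEnull hgood

end M1
open MeasureTheory Set Filter Topology Finset

lemma exp_sub_le_of_le {a b c : ℝ} (hab : a ≤ b) (hbc : b ≤ c) :
    Real.exp b - Real.exp a ≤ Real.exp c * (b - a) := by
  have h1 : a - b + 1 ≤ Real.exp (a - b) := Real.add_one_le_exp _
  have h2 : Real.exp a = Real.exp b * Real.exp (a - b) := by
    rw [← Real.exp_add]; ring_nf
  have h3 : Real.exp b * (a - b + 1) ≤ Real.exp a := by
    rw [h2]
    exact mul_le_mul_of_nonneg_left h1 (Real.exp_pos b).le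
  have h4 : Real.exp b ≤ Real.exp c := Real.exp_le_exp.2 hbc
  nlinarith [Real.exp_pos b]

section M2
variable {N : ℕ} [NeZero N]

lemma window_lower_bound
    (w : Fin N → ℝ → ℝ) (β : Fin N → Fin N → ℝ → ℝ)
    {t0 t1 B D Lw : ℝ} (ht01 : t0 < t1) (hB0 : 0 ≤ B) (hD0 : 0 ≤ D) (hLw : 0 ≤ Lw)
    (hwlip : ∀ i, ∀ u ∈ Set.Icc t0 t1, ∀ z ∈ Set.Icc t0 t1,
      |w i z - w i u| ≤ Lw * |z - u|)
    (hβmeas : ∀ i j, Measurable (β i j))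
    (hβbd : ∀ t ∈ Set.Icc t0 t1, ∀ i j, β i j t ∈ Set.Icc 0 B)
    (hwbd : ∀ t ∈ Set.Icc t0 t1, ∀ i, w i t ∈ Set.Icc 0 D)
    (hae : ∀ᵐ t ∂(volume : Measure ℝ), t ∈ Set.Ioo t0 t1 → ∀ i, HasDerivAt (w i)
      ((N:ℝ)⁻¹ * ∑ j, β i j t * (w j t - w i t)) t)
    (p k : Fin N) :
    Real.exp (-(B * (t1 - t0))) * (w k t0 / N * ∫ s in t0..t1, β p k s) ≤ w p t1 := by
  have hNpos : (0:ℝ) < N := by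
    have := NeZero.pos N; exact_mod_cast this
  set EB : ℝ := Real.exp (B * (t1 - t0)) with hEB
  have hEB1 : (1:ℝ) ≤ EB := by
    rw [hEB, ← Real.exp_zero]
    exact Real.exp_le_exp.2 (by nlinarith)
  set F : Fin N → ℝ → ℝ := fun i t => Real.exp (B * (t - t0)) * w i t with hF
  have hexp_mem : ∀ t ∈ Set.Icc t0 t1, Real.exp (B * (t - t0)) ∈ Set.Icc 1 EB := by
    intro t ht
    constructor
    · rw [← Real.exp_zero]; exact Real.exp_le_exp.2 (by nlinarith [ht.1])
    · rw [hEB]; exact Real.exp_le_exp.2 (by nlinarith [ht.2])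
  have hexp_slope : ∀ u ∈ Set.Icc t0 t1, ∀ z ∈ Set.Icc t0 t1,
      |Real.exp (B * (z - t0)) - Real.exp (B * (u - t0))| ≤ (B * EB) * |z - u| := by
    intro u hu z hz
    rcases le_total u z with h | h
    · rw [abs_of_nonneg (sub_nonneg.2 (Real.exp_le_exp.2 (by nlinarith))),
        abs_of_nonneg (by linarith)]
      have := exp_sub_le_of_le (a := B * (u - t0)) (b := B * (z - t0))
        (c := B * (t1 - t0)) (by nlinarith) (by nlinarith [hz.2])
      rw [← hEB] at this
      nlinarith
    · rw [abs_of_nonpos (sub_nonpos.2 (Real.exp_le_exp.2 (by nlinarith))),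
        abs_of_nonpos (by linarith)]
      have := exp_sub_le_of_le (a := B * (z - t0)) (b := B * (u - t0))
        (c := B * (t1 - t0)) (by nlinarith) (by nlinarith [hu.2])
      rw [← hEB] at this
      nlinarith
  set LF : ℝ := EB * Lw + D * (B * EB) with hLF
  have hFslope : ∀ i, ∀ u ∈ Set.Icc t0 t1, ∀ z ∈ Set.Icc t0 t1,
      |F i z - F i u| ≤ LF * |z - u| := by
    intro i u hu z hz
    have h1 : F i z - F i u = Real.exp (B * (z - t0)) * (w i z - w i u)
        + w i u * (Real.exp (B * (z - t0)) - Real.exp (B * (u - t0))) := by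
      rw [hF]; ring
    rw [h1]
    refine (abs_add_le _ _).trans ?_
    rw [abs_mul, abs_mul]
    have he1 := hexp_mem z hz
    have he2 : |Real.exp (B * (z - t0))| ≤ EB := by
      rw [abs_of_pos (Real.exp_pos _)]; exact he1.2
    have hw1 : |w i u| ≤ D := by
      have := hwbd u hu i
      rw [abs_of_nonneg this.1]; exact this.2
    have h2 := hwlip i u hu z hz
    have h3 := hexp_slope u hu z hz
    have h4 : |w i z - w i u| ≥ 0 := abs_nonneg _
    have h5 : |Real.exp (B * (z - t0)) - Real.exp (B * (u - t0))| ≥ 0 := abs_nonneg _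
    rw [hLF]
    nlinarith [abs_nonneg (z - u), Real.exp_pos (B * (z - t0)),
      (hexp_mem z hz).1, mul_le_mul he2 h2 h4 (by linarith),
      mul_le_mul hw1 h3 h5 hD0]
  -- derivative of F i at good points
  have hFder : ∀ i t, t ∈ Set.Ioo t0 t1 →
      HasDerivAt (w i) ((N:ℝ)⁻¹ * ∑ j, β i j t * (w j t - w i t)) t →
      HasDerivAt (F i) (Real.exp (B * (t - t0)) *
        (B * w i t + (N:ℝ)⁻¹ * ∑ j, β i j t * (w j t - w i t))) t := by
    intro i t _ hw
    have hexp : HasDerivAt (fun t => Real.exp (B * (t - t0)))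
        (Real.exp (B * (t - t0)) * (B * 1)) t :=
      (((hasDerivAt_id t).sub_const t0).const_mul B).exp
    have h2 := hexp.mul hw
    have hFi : F i = fun t => Real.exp (B * (t - t0)) * w i t := rfl
    rw [hFi]
    refine h2.congr_deriv ?_
    ring
  -- part (a)
  have parta : ∀ i, ∀ t' ∈ Set.Icc t0 t1, w i t0 ≤ Real.exp (B * (t' - t0)) * w i t' := by
    intro i t' ht'
    have hstep : F i t0 ≤ F i t' := by
      refine le_of_ae_deriv_nonneg (L := LF) ht'.1 ?_ ?_
      · intro u hu z hz
        exact hFslope i u (Set.Icc_subset_Icc_right ht'.2 hu)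
          z (Set.Icc_subset_Icc_right ht'.2 hz)
      · filter_upwards [hae] with t ht hmem
        have hmem1 : t ∈ Set.Ioo t0 t1 := ⟨hmem.1, hmem.2.trans_le ht'.2⟩
        have hd := hFder i t hmem1 (ht hmem1 i)
        refine ⟨_, hd, ?_⟩
        have htI : t ∈ Set.Icc t0 t1 := ⟨hmem1.1.le, hmem1.2.le⟩
        have hwi := hwbd t htI i
        have hsum : -(B * N) * w i t ≤ ∑ j, β i j t * (w j t - w i t) := by
          have : ∀ j ∈ Finset.univ, -(B * w i t) ≤ β i j t * (w j t - w i t) := by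
            intro j _
            have hβ := hβbd t htI i j
            have hwj := hwbd t htI j
            nlinarith [hβ.1, hβ.2, hwj.1, hwi.1, hwi.2]
          have h := Finset.sum_le_sum this
          simp only [Finset.sum_const, Finset.card_univ, Fintype.card_fin, nsmul_eq_mul] at h
          calc -(B * N) * w i t = (N:ℝ) * (-(B * w i t)) := by ring
            _ ≤ _ := h
        have h6 : 0 ≤ B * w i t + (N:ℝ)⁻¹ * ∑ j, β i j t * (w j t - w i t) := by
          have h7 : (N:ℝ)⁻¹ * (-(B * N) * w i t) ≤
              (N:ℝ)⁻¹ * ∑ j, β i j t * (w j t - w i t) :=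
            mul_le_mul_of_nonneg_left hsum (by positivity)
          have h8 : (N:ℝ)⁻¹ * (-(B * N) * w i t) = -(B * w i t) := by
            field_simp
          linarith [h7, h8.symm.le]
        exact mul_nonneg (Real.exp_pos _).le h6
    have h0 : F i t0 = w i t0 := by rw [hF]; simp
    rw [← h0]
    exact hstep.trans_eq (by rw [hF])
  -- part (b)
  set g : ℝ → ℝ := fun t => (w k t0 / N) * β p k t with hg
  have hgmeas : Measurable g := (hβmeas p k).const_mul _
  have hgC : ∀ t ∈ Set.Icc t0 t1, |g t| ≤ (D / N) * B := by
    intro t ht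
    rw [hg]
    simp only
    rw [abs_mul]
    have h1 := hwbd t0 (Set.left_mem_Icc.2 ht01.le) k
    have h2 := hβbd t ht p k
    have h3 : |w k t0 / N| ≤ D / N := by
      rw [abs_div, abs_of_nonneg h1.1, abs_of_pos hNpos]
      exact (div_le_div_iff_of_pos_right hNpos).2 h1.2
    have h4 : |β p k t| ≤ B := by rw [abs_of_nonneg h2.1]; exact h2.2
    exact mul_le_mul h3 h4 (abs_nonneg _) (by positivity)
  have hmain : ∫ s in t0..t1, g s ≤ F p t1 - F p t0 := by
    refine integral_le_sub_of_ae_deriv (L := LF) ht01.le (hFslope p) hgmeas hgC ?_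
    filter_upwards [hae] with t ht hmem
    have hd := hFder p t hmem (ht hmem p)
    refine ⟨_, hd, ?_⟩
    have htI : t ∈ Set.Icc t0 t1 := ⟨hmem.1.le, hmem.2.le⟩
    have hwp := hwbd t htI p
    have hβpk := hβbd t htI p k
    -- ∑_j β pj (w j - w p) ≥ β pk w k - (∑ β pj) w p ≥ β pk w k - N B w p
    have hsum : β p k t * w k t - (B * N) * w p t ≤ ∑ j, β p j t * (w j t - w p t) := by
      have e1 : ∀ j, β p j t * (w j t - w p t) = β p j t * w j t - β p j t * w p t := by
        intro j; ring
      rw [Finset.sum_congr rfl (fun j _ => e1 j), Finset.sum_sub_distrib]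
      have h1 : β p k t * w k t ≤ ∑ j, β p j t * w j t := by
        refine Finset.single_le_sum (f := fun j => β p j t * w j t) (fun j _ => ?_) (Finset.mem_univ k)
        have hβ := hβbd t htI p j
        have hwj := hwbd t htI j
        exact mul_nonneg hβ.1 hwj.1
      have h2 : ∑ j, β p j t * w p t ≤ (B * N) * w p t := by
        rw [← Finset.sum_mul]
        refine mul_le_mul_of_nonneg_right ?_ hwp.1
        calc ∑ j, β p j t ≤ ∑ _j : Fin N, B :=
              Finset.sum_le_sum (fun j _ => (hβbd t htI p j).2)
          _ = (N:ℝ) * B := by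
              simp [Finset.sum_const, Finset.card_univ, mul_comm]
          _ = B * N := by ring
      linarith
    have hwk := parta k t htI
    -- conclude
    have hβnn : 0 ≤ β p k t := hβpk.1
    have e2 : Real.exp (B * (t - t0)) * (B * w p t +
        (N:ℝ)⁻¹ * ∑ j, β p j t * (w j t - w p t)) ≥
        Real.exp (B * (t - t0)) * ((N:ℝ)⁻¹ * (β p k t * w k t)) := by
      have h3 : (N:ℝ)⁻¹ * (β p k t * w k t - (B * N) * w p t) ≤
          (N:ℝ)⁻¹ * ∑ j, β p j t * (w j t - w p t) :=
        mul_le_mul_of_nonneg_left hsum (by positivity)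
      have h4 : (N:ℝ)⁻¹ * ((B * N) * w p t) = B * w p t := by field_simp
      have h5 : B * w p t + (N:ℝ)⁻¹ * ∑ j, β p j t * (w j t - w p t) ≥
          (N:ℝ)⁻¹ * (β p k t * w k t) := by
        have := h3
        rw [mul_sub] at this
        linarith [h4.symm.le, h4.le]
      exact mul_le_mul_of_nonneg_left h5 (Real.exp_pos _).le
    have e3 : Real.exp (B * (t - t0)) * ((N:ℝ)⁻¹ * (β p k t * w k t)) =
        (N:ℝ)⁻¹ * β p k t * (Real.exp (B * (t - t0)) * w k t) := by ring
    have e4 : (N:ℝ)⁻¹ * β p k t * (Real.exp (B * (t - t0)) * w k t) ≥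
        (N:ℝ)⁻¹ * β p k t * w k t0 :=
      mul_le_mul_of_nonneg_left hwk (by positivity)
    have e5 : g t = (N:ℝ)⁻¹ * β p k t * w k t0 := by rw [hg]; ring_nf
    rw [e5]
    linarith [e2, e3.symm.le, e4]
  -- finish
  have hint : ∫ s in t0..t1, g s = (w k t0 / N) * ∫ s in t0..t1, β p k s := by
    rw [hg]
    exact intervalIntegral.integral_const_mul _ _
  have hF0 : F p t0 = w p t0 := by rw [hF]; simp
  have hF1 : F p t1 = EB * w p t1 := by rw [hF, hEB]
  have hwp0 := (hwbd t0 (Set.left_mem_Icc.2 ht01.le) p).1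
  have hkey : (w k t0 / N) * ∫ s in t0..t1, β p k s ≤ EB * w p t1 := by
    rw [← hint]
    have := hmain
    rw [hF0, hF1] at this
    linarith
  have hEBpos : (0:ℝ) < EB := by rw [hEB]; exact Real.exp_pos _
  have hexpneg : Real.exp (-(B * (t1 - t0))) = EB⁻¹ := by
    rw [hEB, ← Real.exp_neg]
  rw [hexpneg]
  calc EB⁻¹ * (w k t0 / N * ∫ s in t0..t1, β p k s) ≤ EB⁻¹ * (EB * w p t1) :=
        mul_le_mul_of_nonneg_left hkey (by positivity)
    _ = w p t1 := by field_simp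

end M2

open MeasureTheory Set Filter Topology Finset

section helpers

variable {N d : ℕ} [NeZero N]

lemma scrambling_le' (A : Fin N → Fin N → ℝ) (p q : Fin N) :
    (⨅ i : Fin N, ⨅ j : Fin N, (N : ℝ)⁻¹ * ∑ k : Fin N, min (A i k) (A j k)) ≤
    (N : ℝ)⁻¹ * ∑ k : Fin N, min (A p k) (A q k) := by
  refine le_trans (ciInf_le (Set.Finite.bddBelow (Set.finite_range _)) p) ?_
  exact ciInf_le (Set.Finite.bddBelow (Set.finite_range _)) q

lemma integrableOn_of_bdd_meas {g : ℝ → ℝ} {a b C : ℝ}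
    (hg : Measurable g) (hC : ∀ t ∈ Set.Icc a b, |g t| ≤ C) :
    IntegrableOn g (Set.Icc a b) (volume : Measure ℝ) := by
  refine Integrable.mono' (integrable_const C) hg.aestronglyMeasurable.restrict ?_
  rw [ae_restrict_iff' measurableSet_Icc]
  exact Eventually.of_forall (fun t ht => by simpa [Real.norm_eq_abs] using hC t ht)

end helpers

set_option maxHeartbeats 1000000 in
/-- exponential diameter decay for scrambling-persistent topologies:
for every `(τ,μ)` and every compact set of initial data there exist `α, γ > 0` such that
`D(x(t)) ≤ α D(x(0)) e^{−γ t}` along every solution driven by a signal in `G_η(τ,μ)`. -/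
theorem exponential_diam_decay_scrambling {N d : ℕ} (hN : 1 ≤ N)
    (τ μ : ℝ) (hτ : 0 < τ) (hμ : μ ∈ Set.Ioc (0 : ℝ) 1)
    (φ : ℝ → ℝ) (hφ : ValidKernel φ)
    (K0 : Set (Fin N → EuclideanSpace ℝ (Fin d))) (hK0 : IsCompact K0) :
    ∃ α γ : ℝ, 0 < α ∧ 0 < γ ∧
      ∀ (a : Fin N → Fin N → ℝ → ℝ) (x : Fin N → ℝ → EuclideanSpace ℝ (Fin d)),
        ScramblingPersistent N τ μ a → IsMASol a φ x → (fun i => x i 0) ∈ K0 →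
        ∀ t : ℝ, 0 ≤ t →
          mDiam (fun i => x i t) ≤ α * mDiam (fun i => x i 0) * Real.exp (-γ * t) := by
  haveI : NeZero N := ⟨Nat.one_le_iff_ne_zero.1 hN⟩
  have hNR : (0:ℝ) < N := by exact_mod_cast hN
  obtain ⟨hμ0, hμ1⟩ := hμ
  obtain ⟨r0, hr0⟩ := hK0.isBounded.subset_closedBall 0
  set R : ℝ := 2 * max r0 0 + 1 with hRdef
  have hR0 : 0 < R := by positivity
  have hK0R : ∀ y ∈ K0, ∀ i j : Fin N, ‖y i - y j‖ ≤ R := by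
    intro y hy i j
    have hmem := hr0 hy
    rw [Metric.mem_closedBall, dist_zero_right] at hmem
    have h1 : ‖y i‖ ≤ max r0 0 :=
      (norm_le_pi_norm y i).trans (hmem.trans (le_max_left _ _))
    have h2 : ‖y j‖ ≤ max r0 0 :=
      (norm_le_pi_norm y j).trans (hmem.trans (le_max_left _ _))
    calc ‖y i - y j‖ ≤ ‖y i‖ + ‖y j‖ := norm_sub_le _ _
      _ ≤ R := by rw [hRdef]; linarith
  have hφc : Continuous φ := hφ.1.continuous
  obtain ⟨rm, hrmmem, hrm⟩ := isCompact_Icc.exists_isMinOn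
    (Set.nonempty_Icc.2 hR0.le) hφc.continuousOn
  obtain ⟨rM, hrMmem, hrM⟩ := isCompact_Icc.exists_isMaxOn
    (Set.nonempty_Icc.2 hR0.le) hφc.continuousOn
  set m : ℝ := φ rm with hmdef
  set B : ℝ := φ rM with hBdef
  have hm0 : 0 < m := hφ.2 rm hrmmem.1
  have hφmem : ∀ u ∈ Set.Icc (0:ℝ) R, φ u ∈ Set.Icc m B :=
    fun u hu => ⟨hrm hu, hrM hu⟩
  have hmB : m ≤ B := (hφmem rm hrmmem).2
  have hB0 : 0 < B := hm0.trans_le hmB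
  set δ : ℝ := Real.exp (-(B * τ)) * (m * μ * τ) / (2 * N) with hδdef
  have hδ0 : 0 < δ := by
    rw [hδdef]
    have := Real.exp_pos (-(B * τ))
    positivity
  have hδ1 : δ < 1 := by
    rw [hδdef]
    have h1 : B * τ + 1 ≤ Real.exp (B * τ) := Real.add_one_le_exp _
    have h2 : Real.exp (-(B * τ)) * Real.exp (B * τ) = 1 := by
      rw [← Real.exp_add]; simp
    have h3 : 0 < Real.exp (-(B * τ)) := Real.exp_pos _
    have h4 : 0 < Real.exp (B * τ) := Real.exp_pos _
    have h5 : m * μ * τ ≤ B * τ := by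
      nlinarith [mul_nonneg (mul_nonneg hm0.le (sub_nonneg.2 hμ1)) hτ.le,
        mul_nonneg (sub_nonneg.2 hmB) hτ.le]
    have h6 : Real.exp (-(B * τ)) * (B * τ) < 1 := by nlinarith
    have h7 : Real.exp (-(B * τ)) * (m * μ * τ) < 1 := by nlinarith
    have hN1 : (1:ℝ) ≤ (N:ℝ) := by exact_mod_cast hN
    have h8 : (1:ℝ) ≤ 2 * N := by linarith
    rw [div_lt_one (by linarith)]
    nlinarith
  set b1 : ℝ := 1 - δ with hb1def
  have hb1 : 0 < b1 := by rw [hb1def]; linarith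
  have hb1lt : b1 < 1 := by rw [hb1def]; linarith
  set γ : ℝ := -Real.log b1 / τ with hγdef
  have hγ0 : 0 < γ := by
    rw [hγdef]
    exact div_pos (neg_pos.2 (Real.log_neg hb1 hb1lt)) hτ
  refine ⟨b1⁻¹, γ, by positivity, hγ0, ?_⟩
  intro a x hscr hsol hx0 t ht
  obtain ⟨hva, hsc⟩ := hscr
  obtain ⟨hxlip, hxae⟩ := hsol
  have hne : (Finset.univ : Finset (Fin N)).Nonempty := Finset.univ_nonempty
  set Mv : EuclideanSpace ℝ (Fin d) → ℝ → ℝ := fun v u =>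
    Finset.univ.sup' Finset.univ_nonempty (fun i => (⟪v, x i u⟫ : ℝ)) with hMvdef
  set Dm : ℝ → ℝ := fun u => Finset.univ.sup' Finset.univ_nonempty
    (fun pq : Fin N × Fin N => ‖x pq.1 u - x pq.2 u‖) with hDmdef
  -- interface lemmas
  have hMle : ∀ (v : EuclideanSpace ℝ (Fin d)) (s : ℝ) (i : Fin N),
      (⟪v, x i s⟫ : ℝ) ≤ Mv v s := by
    intro v s i
    simp only [hMvdef]
    exact Finset.le_sup' (f := fun i => (⟪v, x i s⟫ : ℝ)) (Finset.mem_univ i)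
  have hMattain : ∀ (v : EuclideanSpace ℝ (Fin d)) (s : ℝ), ∃ i : Fin N,
      Mv v s = ⟪v, x i s⟫ := by
    intro v s
    obtain ⟨i, _, hi⟩ := Finset.exists_mem_eq_sup' (Finset.univ_nonempty)
      (fun i : Fin N => (⟪v, x i s⟫ : ℝ))
    exact ⟨i, by simp only [hMvdef]; exact hi⟩
  have hDble : ∀ (s : ℝ) (p q : Fin N), ‖x p s - x q s‖ ≤ Dm s := by
    intro s p q
    simp only [hDmdef]
    exact Finset.le_sup' (fun pq : Fin N × Fin N => ‖x pq.1 s - x pq.2 s‖)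
      (Finset.mem_univ (p, q))
  have hDsup : ∀ (s : ℝ) (y : ℝ), (∀ p q : Fin N, ‖x p s - x q s‖ ≤ y) → Dm s ≤ y := by
    intro s y h
    simp only [hDmdef]
    exact Finset.sup'_le _ _ (fun pq _ => h pq.1 pq.2)
  set c : Fin N → Fin N → ℝ → ℝ := fun i j s => a i j s * φ ‖x i s - x j s‖ with hcdef
  have hcpos : ∀ s : ℝ, 0 ≤ s → ∀ i j, 0 ≤ c i j s := by
    intro s hs i j
    simp only [hcdef]
    exact mul_nonneg ((hva i j).2 s hs).1 (hφ.2 _ (norm_nonneg _)).le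
  have hxae' : ∀ᵐ s ∂(volume : Measure ℝ), 0 ≤ s → ∀ i, HasDerivAt (x i)
      ((N : ℝ)⁻¹ • ∑ j : Fin N, (c i j s) • (x j s - x i s)) s := by
    filter_upwards [hxae] with s hs hs0 i
    have := hs hs0 i
    simpa only [hcdef] using this
  have hM1 : ∀ v : EuclideanSpace ℝ (Fin d), ∀ s t' : ℝ, 0 ≤ s → s ≤ t' →
      Mv v t' ≤ Mv v s := by
    intro v s t' hs hst
    simp only [hMvdef]
    exact dirmax_antitone x c hxlip hcpos hxae' v hs hst
  have hDmnn : ∀ s : ℝ, 0 ≤ Dm s := by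
    intro s
    exact le_trans (norm_nonneg _) (hDble s ⟨0, hN⟩ ⟨0, hN⟩)
  have hMsum : ∀ (v : EuclideanSpace ℝ (Fin d)), ‖v‖ ≤ 1 → ∀ s : ℝ,
      Mv v s + Mv (-v) s ≤ Dm s := by
    intro v hv s
    obtain ⟨i0, hi0⟩ := hMattain v s
    obtain ⟨j0, hj0⟩ := hMattain (-v) s
    have h3 : (⟪v, x i0 s⟫ : ℝ) + ⟪-v, x j0 s⟫ = ⟪v, x i0 s - x j0 s⟫ := by
      rw [inner_neg_left, inner_sub_right]; ring
    have h4 : (⟪v, x i0 s - x j0 s⟫ : ℝ) ≤ ‖x i0 s - x j0 s‖ := by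
      refine (real_inner_le_norm _ _).trans ?_
      nlinarith [norm_nonneg (x i0 s - x j0 s), norm_nonneg v]
    have h5 := hDble s i0 j0
    rw [hi0, hj0]
    linarith
  have hdist : ∀ s t' : ℝ, 0 ≤ s → s ≤ t' → ∀ p q : Fin N,
      ‖x p t' - x q t'‖ ≤ Dm s := by
    intro s t' hs hst p q
    by_cases hu : x p t' - x q t' = 0
    · rw [hu, norm_zero]; exact hDmnn s
    · have hun : 0 < ‖x p t' - x q t'‖ := norm_pos_iff.2 hu
      set u := x p t' - x q t' with hudef
      set v := ‖u‖⁻¹ • u with hvdef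
      have hvnorm : ‖v‖ = 1 := by
        rw [hvdef, norm_smul, norm_inv, norm_norm]
        field_simp
      have hinner : (⟪v, u⟫ : ℝ) = ‖u‖ := by
        rw [hvdef, real_inner_smul_left, real_inner_self_eq_norm_sq]
        field_simp
      have h1 : ‖u‖ = (⟪v, x p t'⟫ : ℝ) - ⟪v, x q t'⟫ := by
        rw [← hinner, hudef, inner_sub_right]
      have h2 : (⟪v, x p t'⟫ : ℝ) ≤ Mv v t' := hMle v t' p
      have h3 : -(⟪v, x q t'⟫ : ℝ) ≤ Mv (-v) t' := by
        have := hMle (-v) t' q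
        rwa [inner_neg_left] at this
      have h4 := hM1 v s t' hs hst
      have h5 := hM1 (-v) s t' hs hst
      have h6 := hMsum v hvnorm.le s
      linarith
  have hDmmono : ∀ s t' : ℝ, 0 ≤ s → s ≤ t' → Dm t' ≤ Dm s :=
    fun s t' hs hst => hDsup t' (Dm s) (hdist s t' hs hst)
  have hDmR : Dm 0 ≤ R := hDsup 0 R (fun p q => hK0R _ hx0 p q)
  have hdistR : ∀ t' : ℝ, 0 ≤ t' → ∀ p q : Fin N, ‖x p t' - x q t'‖ ≤ R :=
    fun t' ht' p q => (hdist 0 t' le_rfl ht' p q).trans hDmR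
  have hxcont : ∀ i, Continuous (fun s : ℝ => x i (max s 0)) := by
    intro i
    have hconOn : ContinuousOn (x i) (Set.Ici 0) := by
      intro u hu
      rw [Set.mem_Ici] at hu
      obtain ⟨K, hK⟩ := hxlip i (u+1) (by linarith)
      have h1 : ContinuousWithinAt (x i) (Set.Icc 0 (u+1)) u :=
        hK.continuousOn u ⟨hu, by linarith⟩
      refine h1.mono_of_mem_nhdsWithin ?_
      have he : Set.Icc (0:ℝ) (u+1) = Set.Ici 0 ∩ Set.Iic (u+1) := (Set.Ici_inter_Iic).symm
      rw [he]
      exact inter_mem_nhdsWithin _ (Iic_mem_nhds (by linarith))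
    exact hconOn.comp_continuous (continuous_id.max continuous_const)
      (fun s => Set.mem_Ici.2 (le_max_right s 0))
  set β : Fin N → Fin N → ℝ → ℝ := fun i j s =>
    a i j s * φ ‖x i (max s 0) - x j (max s 0)‖ with hβdef
  have hβmeas : ∀ i j, Measurable (β i j) := by
    intro i j
    simp only [hβdef]
    exact (hva i j).1.mul
      ((hφc.comp ((hxcont i).sub (hxcont j)).norm).measurable)
  have hβeq : ∀ s : ℝ, 0 ≤ s → ∀ i j, β i j s = c i j s := by
    intro s hs i j
    simp only [hβdef, hcdef, max_eq_left hs]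
  have hβbd : ∀ s : ℝ, 0 ≤ s → ∀ i j, β i j s ∈ Set.Icc 0 B := by
    intro s hs i j
    have ha := (hva i j).2 s hs
    have hd : ‖x i (max s 0) - x j (max s 0)‖ ∈ Set.Icc (0:ℝ) R := by
      rw [max_eq_left hs]
      exact ⟨norm_nonneg _, hdistR s hs i j⟩
    have hφd := hφmem _ hd
    simp only [hβdef]
    constructor
    · exact mul_nonneg ha.1 (hm0.trans_le hφd.1).le
    · calc a i j s * φ ‖x i (max s 0) - x j (max s 0)‖ ≤ 1 * B :=
          mul_le_mul ha.2 hφd.2 (hm0.trans_le hφd.1).le (by linarith)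
        _ = B := one_mul B
  -- window contraction
  have hwin : ∀ t0 : ℝ, 0 ≤ t0 → Dm (t0 + τ) ≤ b1 * Dm t0 := by
    intro t0 ht0
    set t1 : ℝ := t0 + τ with ht1def
    have ht01 : t0 < t1 := by rw [ht1def]; linarith
    have ht10 : t1 - t0 = τ := by rw [ht1def]; ring
    obtain ⟨Kf, hKf0, hKflip⟩ : ∃ Kf : ℝ, 0 ≤ Kf ∧ ∀ i, ∀ u ∈ Set.Icc t0 t1,
        ∀ z ∈ Set.Icc t0 t1, ‖x i z - x i u‖ ≤ Kf * |z - u| := by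
      have ht1pos : (0:ℝ) < t1 + 1 := by linarith
      choose K hK using fun i => hxlip i (t1+1) ht1pos
      refine ⟨(Finset.univ.sup K : NNReal), NNReal.coe_nonneg _, fun i u hu z hz => ?_⟩
      have h1 := (hK i).dist_le_mul z ⟨ht0.trans hz.1, by linarith [hz.2]⟩
        u ⟨ht0.trans hu.1, by linarith [hu.2]⟩
      rw [dist_eq_norm, Real.dist_eq] at h1
      refine h1.trans (mul_le_mul_of_nonneg_right ?_ (abs_nonneg _))
      exact_mod_cast NNReal.coe_le_coe.2 (Finset.le_sup (Finset.mem_univ i))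
    have hsck := hsc t0 ht0
    rw [show scrambling (fun i j => τ⁻¹ * ∫ s in t0..t0 + τ, a i j s) =
      ⨅ i : Fin N, ⨅ j : Fin N, (N : ℝ)⁻¹ * ∑ k : Fin N,
        min (τ⁻¹ * ∫ s in t0..t0 + τ, a i k s) (τ⁻¹ * ∫ s in t0..t0 + τ, a j k s)
      from rfl] at hsck
    have hscrk : ∀ p q : Fin N, ∃ k : Fin N,
        μ * τ ≤ (∫ s in t0..t1, a p k s) ∧ μ * τ ≤ (∫ s in t0..t1, a q k s) := by
      intro p q
      have h1 : μ ≤ (N:ℝ)⁻¹ * ∑ k : Fin N,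
          min (τ⁻¹ * ∫ s in t0..t0 + τ, a p k s) (τ⁻¹ * ∫ s in t0..t0 + τ, a q k s) :=
        hsck.trans (scrambling_le' _ p q)
      by_contra hcon
      push_neg at hcon
      have h2 : ∀ k : Fin N,
          min (τ⁻¹ * ∫ s in t0..t0 + τ, a p k s) (τ⁻¹ * ∫ s in t0..t0 + τ, a q k s)
            < μ := by
        intro k
        rcases lt_or_ge (∫ s in t0..t1, a p k s) (μ * τ) with h | h
        · refine (min_le_left _ _).trans_lt ?_
          rw [← ht1def, inv_mul_lt_iff₀ hτ, mul_comm]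
          exact h
        · have h' := hcon k h
          refine (min_le_right _ _).trans_lt ?_
          rw [← ht1def, inv_mul_lt_iff₀ hτ, mul_comm]
          exact h'
      have h3 : ∑ k : Fin N,
          min (τ⁻¹ * ∫ s in t0..t0 + τ, a p k s) (τ⁻¹ * ∫ s in t0..t0 + τ, a q k s) <
          ∑ _k : Fin N, μ :=
        Finset.sum_lt_sum_of_nonempty hne (fun k _ => h2 k)
      rw [Finset.sum_const, Finset.card_univ, Fintype.card_fin, nsmul_eq_mul] at h3
      have h4 := mul_lt_mul_of_pos_left h3 (show (0:ℝ) < (N:ℝ)⁻¹ by positivity)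
      rw [← mul_assoc, inv_mul_cancel₀ (by positivity), one_mul] at h4
      linarith
    have hβint : ∀ i j : Fin N, μ * τ ≤ ∫ s in t0..t1, a i j s →
        m * (μ * τ) ≤ ∫ s in t0..t1, β i j s := by
      intro i j hij
      have hint1 : IntervalIntegrable (fun s => m * a i j s) volume t0 t1 := by
        rw [intervalIntegrable_iff_integrableOn_Icc_of_le ht01.le]
        exact integrableOn_of_bdd_meas (C := m * 1) ((hva i j).1.const_mul m)
          (fun s hs => by
            have := (hva i j).2 s (ht0.trans hs.1)
            rw [abs_mul, abs_of_pos hm0, abs_of_nonneg this.1]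
            exact mul_le_mul_of_nonneg_left this.2 hm0.le)
      have hint2 : IntervalIntegrable (β i j) volume t0 t1 := by
        rw [intervalIntegrable_iff_integrableOn_Icc_of_le ht01.le]
        exact integrableOn_of_bdd_meas (C := B) (hβmeas i j)
          (fun s hs => by
            have := hβbd s (ht0.trans hs.1) i j
            rw [abs_of_nonneg this.1]; exact this.2)
      have hmono : ∀ s ∈ Set.Icc t0 t1, m * a i j s ≤ β i j s := by
        intro s hs
        have hs0 : (0:ℝ) ≤ s := ht0.trans hs.1
        have ha := (hva i j).2 s hs0
        have hd : ‖x i (max s 0) - x j (max s 0)‖ ∈ Set.Icc (0:ℝ) R := by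
          rw [max_eq_left hs0]
          exact ⟨norm_nonneg _, hdistR s hs0 i j⟩
        have hφd := hφmem _ hd
        simp only [hβdef]
        calc m * a i j s = a i j s * m := by ring
          _ ≤ a i j s * φ ‖x i (max s 0) - x j (max s 0)‖ :=
            mul_le_mul_of_nonneg_left hφd.1 ha.1
      have h5 := intervalIntegral.integral_mono_on ht01.le hint1 hint2 hmono
      rw [intervalIntegral.integral_const_mul] at h5
      calc m * (μ * τ) ≤ m * ∫ s in t0..t1, a i j s :=
            mul_le_mul_of_nonneg_left hij hm0.le
        _ ≤ _ := h5
    refine hDsup t1 (b1 * Dm t0) (fun p q => ?_)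
    by_cases hu : x p t1 - x q t1 = 0
    · rw [hu, norm_zero]
      exact mul_nonneg (by linarith) (hDmnn t0)
    have hun : 0 < ‖x p t1 - x q t1‖ := norm_pos_iff.2 hu
    set u := x p t1 - x q t1 with hudef
    set v := ‖u‖⁻¹ • u with hvdef
    have hvnorm : ‖v‖ = 1 := by
      rw [hvdef, norm_smul, norm_inv, norm_norm]; field_simp
    have hinner : (⟪v, u⟫ : ℝ) = ‖u‖ := by
      rw [hvdef, real_inner_smul_left, real_inner_self_eq_norm_sq]
      field_simp
    set m0 : ℝ := -(Mv (-v) t0) with hm0def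
    set Dv : ℝ := Mv v t0 - m0 with hDvdef
    set z : Fin N → ℝ → ℝ := fun i s => (⟪v, x i s⟫ : ℝ) - m0 with hzdef
    have hzval : ∀ i s, z i s = (⟪v, x i s⟫ : ℝ) - m0 := fun i s => by rw [hzdef]
    have hzbd : ∀ s ∈ Set.Icc t0 t1, ∀ i, z i s ∈ Set.Icc 0 Dv := by
      intro s hs i
      constructor
      · have h1 : -(⟪v, x i s⟫ : ℝ) ≤ Mv (-v) s := by
          have := hMle (-v) s i
          rwa [inner_neg_left] at this
        have h2 := hM1 (-v) t0 s ht0 hs.1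
        rw [hzval, hm0def]; linarith
      · have h1 : (⟪v, x i s⟫ : ℝ) ≤ Mv v s := hMle v s i
        have h2 := hM1 v t0 s ht0 hs.1
        rw [hzval, hDvdef]; linarith
    have hDv0 : 0 ≤ Dv := by
      have := hzbd t0 (Set.left_mem_Icc.2 ht01.le) ⟨0, hN⟩
      exact this.1.trans this.2
    have hDvD : Dv ≤ Dm t0 := by
      have := hMsum v hvnorm.le t0
      rw [hDvdef, hm0def]; linarith
    have hzlip : ∀ i, ∀ u' ∈ Set.Icc t0 t1, ∀ z' ∈ Set.Icc t0 t1,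
        |z i z' - z i u'| ≤ Kf * |z' - u'| := by
      intro i u' hu' z' hz'
      rw [hzval, hzval, sub_sub_sub_cancel_right, ← inner_sub_right]
      refine (abs_real_inner_le_norm _ _).trans ?_
      rw [hvnorm, one_mul]
      exact hKflip i u' hu' z' hz'
    have hzae : ∀ᵐ s ∂(volume : Measure ℝ), s ∈ Set.Ioo t0 t1 → ∀ i,
        HasDerivAt (z i) ((N:ℝ)⁻¹ * ∑ j, β i j s * (z j s - z i s)) s := by
      filter_upwards [hxae'] with s hs hmem i
      have hs0 : 0 ≤ s := ht0.trans hmem.1.le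
      have hder := hs hs0 i
      have h1 : HasDerivAt (fun w => (⟪v, x i w⟫ : ℝ))
          ((N:ℝ)⁻¹ * ∑ j, β i j s * (z j s - z i s)) s := by
        have h0 := HasDerivAt.inner ℝ (hasDerivAt_const s v) hder
        refine h0.congr_deriv ?_
        rw [inner_zero_left, add_zero, inner_smul_sum_eq]
        congr 1
        refine Finset.sum_congr rfl (fun j _ => ?_)
        rw [hβeq s hs0, inner_sub_right, hzval, hzval]
        ring
      have h2 := h1.sub_const m0
      have h3 : z i = fun w => (⟪v, x i w⟫ : ℝ) - m0 := by
        funext w; rw [hzval]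
      rw [h3]
      exact h2
    obtain ⟨k, hkp, hkq⟩ := hscrk p q
    have hβintp := hβint p k hkp
    have hβintq := hβint q k hkq
    have hβbd' : ∀ s ∈ Set.Icc t0 t1, ∀ i j, β i j s ∈ Set.Icc 0 B :=
      fun s hs i j => hβbd s (ht0.trans hs.1) i j
    have hmt0 : 0 ≤ m * (μ * τ) := by positivity
    have hkey : ‖u‖ ≤ b1 * Dv := by
      have h7 : ‖u‖ = z p t1 - z q t1 := by
        rw [hzval, hzval, ← hinner, hudef, inner_sub_right]
        ring
      rcases le_or_gt (Dv / 2) (z k t0) with hcase | hcase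
      · have hwin1 := window_lower_bound z β ht01 hB0.le hDv0 hKf0
          hzlip hβmeas hβbd' hzbd hzae q k
        rw [ht10] at hwin1
        have hE := Real.exp_pos (-(B * τ))
        have h2 : m * (μ * τ) * (Dv / 2) ≤ (∫ s in t0..t1, β q k s) * z k t0 :=
          mul_le_mul hβintq hcase (by linarith) (hmt0.trans hβintq)
        have hzq : δ * Dv ≤ z q t1 := by
          refine le_trans ?_ hwin1
          calc δ * Dv = Real.exp (-(B * τ)) * (m * (μ * τ) * (Dv / 2) / N) := by
                rw [hδdef]; field_simp
            _ ≤ Real.exp (-(B * τ)) * ((∫ s in t0..t1, β q k s) * z k t0 / N) := by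
                refine mul_le_mul_of_nonneg_left ?_ hE.le
                exact (div_le_div_iff_of_pos_right hNR).2 h2
            _ = Real.exp (-(B * τ)) * (z k t0 / ↑N * ∫ s in t0..t1, β q k s) := by
                ring
        have hzp : z p t1 ≤ Dv := (hzbd t1 (Set.right_mem_Icc.2 ht01.le) p).2
        rw [h7, hb1def]
        linarith
      · set w : Fin N → ℝ → ℝ := fun i s => Dv - z i s with hwdef
        have hwval : ∀ i s, w i s = Dv - z i s := fun i s => by rw [hwdef]
        have hwbd : ∀ s ∈ Set.Icc t0 t1, ∀ i, w i s ∈ Set.Icc 0 Dv := by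
          intro s hs i
          have := hzbd s hs i
          rw [hwval]
          exact ⟨by linarith [this.2], by linarith [this.1]⟩
        have hwlip : ∀ i, ∀ u' ∈ Set.Icc t0 t1, ∀ z' ∈ Set.Icc t0 t1,
            |w i z' - w i u'| ≤ Kf * |z' - u'| := by
          intro i u' hu' z' hz'
          rw [hwval, hwval,
            show Dv - z i z' - (Dv - z i u') = -(z i z' - z i u') by ring, abs_neg]
          exact hzlip i u' hu' z' hz'
        have hwae : ∀ᵐ s ∂(volume : Measure ℝ), s ∈ Set.Ioo t0 t1 → ∀ i,
            HasDerivAt (w i) ((N:ℝ)⁻¹ * ∑ j, β i j s * (w j s - w i s)) s := by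
          filter_upwards [hzae] with s hs hmem i
          have h1 := (hs hmem i).const_sub Dv
          have h2 : (N:ℝ)⁻¹ * ∑ j, β i j s * (w j s - w i s) =
              -((N:ℝ)⁻¹ * ∑ j, β i j s * (z j s - z i s)) := by
            rw [← mul_neg, ← Finset.sum_neg_distrib]
            congr 1
            refine Finset.sum_congr rfl (fun j _ => ?_)
            rw [hwval, hwval]
            ring
          have h3 : w i = fun s => Dv - z i s := by funext s'; rw [hwval]
          rw [h3, h2]
          exact h1
        have hwin1 := window_lower_bound w β ht01 hB0.le hDv0 hKf0
          hwlip hβmeas hβbd' hwbd hwae p k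
        rw [ht10] at hwin1
        have hE := Real.exp_pos (-(B * τ))
        have hwk : Dv / 2 ≤ w k t0 := by rw [hwval]; linarith
        have h2 : m * (μ * τ) * (Dv / 2) ≤ (∫ s in t0..t1, β p k s) * w k t0 :=
          mul_le_mul hβintp hwk (by linarith) (hmt0.trans hβintp)
        have hwp : δ * Dv ≤ w p t1 := by
          refine le_trans ?_ hwin1
          calc δ * Dv = Real.exp (-(B * τ)) * (m * (μ * τ) * (Dv / 2) / N) := by
                rw [hδdef]; field_simp
            _ ≤ Real.exp (-(B * τ)) * ((∫ s in t0..t1, β p k s) * w k t0 / N) := by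
                refine mul_le_mul_of_nonneg_left ?_ hE.le
                exact (div_le_div_iff_of_pos_right hNR).2 h2
            _ = Real.exp (-(B * τ)) * (w k t0 / ↑N * ∫ s in t0..t1, β p k s) := by
                ring
        have hzq0 : 0 ≤ z q t1 := (hzbd t1 (Set.right_mem_Icc.2 ht01.le) q).1
        have hzp : z p t1 ≤ Dv - δ * Dv := by
          have h8 : w p t1 = Dv - z p t1 := hwval p t1
          linarith [hwp, h8.le]
        rw [h7, hb1def]
        linarith
    calc ‖x p t1 - x q t1‖ = ‖u‖ := by rw [hudef]
      _ ≤ b1 * Dv := hkey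
      _ ≤ b1 * Dm t0 := mul_le_mul_of_nonneg_left hDvD hb1.le
  have hiter : ∀ n : ℕ, Dm ((n : ℝ) * τ) ≤ b1 ^ n * Dm 0 := by
    intro n
    induction n with
    | zero => simp
    | succ n ih =>
      have h1 : ((n+1 : ℕ) : ℝ) * τ = (n : ℝ) * τ + τ := by push_cast; ring
      rw [h1]
      calc Dm ((n : ℝ) * τ + τ) ≤ b1 * Dm ((n : ℝ) * τ) :=
            hwin ((n : ℝ) * τ) (by positivity)
        _ ≤ b1 * (b1 ^ n * Dm 0) := mul_le_mul_of_nonneg_left ih hb1.le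
        _ = b1 ^ (n+1) * Dm 0 := by ring
  set n : ℕ := ⌊t / τ⌋₊ with hndef
  have hnt : (n : ℝ) * τ ≤ t := by
    have h1 : (n : ℝ) ≤ t / τ := Nat.floor_le (by positivity)
    calc (n : ℝ) * τ ≤ (t / τ) * τ := mul_le_mul_of_nonneg_right h1 hτ.le
      _ = t := by field_simp
  have htn : t / τ < (n : ℝ) + 1 := Nat.lt_floor_add_one _
  have hDmt : Dm t ≤ b1 ^ n * Dm 0 :=
    (hDmmono ((n : ℝ) * τ) t (by positivity) hnt).trans (hiter n)
  have hpow : b1 ^ n ≤ b1⁻¹ * Real.exp (-γ * t) := by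
    have hlog : Real.log b1 < 0 := Real.log_neg hb1 hb1lt
    have h1 : b1 ^ n = Real.exp ((n : ℝ) * Real.log b1) := by
      rw [Real.exp_nat_mul, Real.exp_log hb1]
    have h2 : (n : ℝ) * Real.log b1 ≤ (t / τ - 1) * Real.log b1 := by
      nlinarith [htn, hlog]
    have h4 : Real.exp ((t / τ - 1) * Real.log b1) = b1⁻¹ * Real.exp (-γ * t) := by
      rw [show (t / τ - 1) * Real.log b1 =
        -Real.log b1 + (-γ * t) by rw [hγdef]; field_simp; ring]
      rw [Real.exp_add, Real.exp_neg, Real.exp_log hb1]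
    rw [h1, ← h4]
    exact Real.exp_le_exp.2 h2
  have hmdiam : ∀ s : ℝ, mDiam (fun i => x i s) = Dm s := by
    intro s
    rw [mDiam]
    apply le_antisymm
    · exact ciSup_le (fun i => ciSup_le (fun j => hDble s i j))
    · refine hDsup s _ (fun p q => ?_)
      calc ‖x p s - x q s‖ ≤ ⨆ j : Fin N, ‖x p s - x j s‖ :=
            le_ciSup (f := fun j : Fin N => ‖x p s - x j s‖)
              (Set.Finite.bddAbove (Set.finite_range _)) q
        _ ≤ ⨆ i : Fin N, ⨆ j : Fin N, ‖x i s - x j s‖ :=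
            le_ciSup (f := fun i => ⨆ j : Fin N, ‖x i s - x j s‖)
              (Set.Finite.bddAbove (Set.finite_range _)) p
  rw [hmdiam t, hmdiam 0]
  calc Dm t ≤ b1 ^ n * Dm 0 := hDmt
    _ ≤ (b1⁻¹ * Real.exp (-γ * t)) * Dm 0 :=
        mul_le_mul_of_nonneg_right hpow (hDmnn 0)
    _ = b1⁻¹ * Dm 0 * Real.exp (-γ * t) := by ring
end
end

section
/- Let x(·) be a solution of the nonlinear multiagent system, let t ≥ 0, let (i,j) be a pair of indices with |x_i(t) − x_j(t)| = D(x(t)), and let C_φ > 0 be an upper bound for φ on [0, D(x(0))]. Then for every index k and every s ≥ t one has ⟨x_i(t) − x_k(s), x_i(t) − x_j(t)⟩ ≥ ⟨x_i(t) − x_k(t), x_i(t) − x_j(t)⟩ e^{−C_φ (s−t)}, and similarly ⟨x_k(s) − x_j(t), x_i(t) − x_j(t)⟩ ≥ ⟨x_k(t) − x_j(t), x_i(t) − x_j(t)⟩ e^{−C_φ (s−t)}. -/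
open MeasureTheory Finset

noncomputable section

section AuxLemmas
open Filter Set


lemma ev_slope {f : ℝ → ℝ} {s f' : ℝ} (h : HasDerivAt f f' s) (h0 : 0 ≤ f')
    {ε : ℝ} (hε : 0 < ε) : ∀ᶠ y in nhdsWithin s (Set.Ioi s), f s - ε * (y - s) ≤ f y := by
  have ht : Tendsto (slope f s) (nhdsWithin s {s}ᶜ) (nhds f') :=
    hasDerivAt_iff_tendsto_slope.1 h
  have hmem : Set.Ioi (-ε) ∈ nhds f' := Ioi_mem_nhds (by linarith)
  have h1 : ∀ᶠ y in nhdsWithin s {s}ᶜ, slope f s y ∈ Set.Ioi (-ε) := ht hmem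
  have hle : nhdsWithin s (Set.Ioi s) ≤ nhdsWithin s {s}ᶜ :=
    nhdsWithin_mono s (fun y hy => ne_of_gt hy)
  filter_upwards [hle h1, self_mem_nhdsWithin] with y hy hy'
  have hys : (0:ℝ) < y - s := sub_pos.2 hy'
  rw [Set.mem_Ioi, slope_def_field, lt_div_iff₀ hys] at hy
  nlinarith

lemma key {f : ℝ → ℝ} {a b L : ℝ} (hab : a ≤ b) (hL : 0 ≤ L)
    (hlip : ∀ y ∈ Set.Icc a b, ∀ z ∈ Set.Icc a b, |f y - f z| ≤ L * |y - z|)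
    (hd : ∀ᵐ s ∂(volume : Measure ℝ), s ∈ Set.Ico a b →
      ∀ ε : ℝ, 0 < ε → ∀ᶠ y in nhdsWithin s (Set.Ioi s), f s - ε * (y - s) ≤ f y) :
    f a ≤ f b := by
  rcases eq_or_lt_of_le hab with rfl | hab'
  · exact le_refl _
  -- suffices: ∀ δ > 0, f a ≤ f b + δ
  refine le_of_forall_pos_le_add (fun δ hδ => ?_)
  set ε : ℝ := δ / (2 * (b - a)) with hε_def
  have hε : 0 < ε := div_pos hδ (by linarith)
  set ε' : ℝ := δ / (2 * (L + 1)) with hε'_def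
  have hε' : 0 < ε' := div_pos hδ (by linarith)
  -- bad set and open cover
  set E : Set ℝ := {s | ¬ (s ∈ Set.Ico a b →
      ∀ ε : ℝ, 0 < ε → ∀ᶠ y in nhdsWithin s (Set.Ioi s), f s - ε * (y - s) ≤ f y)} with hE_def
  have hE0 : volume E = 0 := hd
  obtain ⟨U, hEU, hUopen, hUvol⟩ := Set.exists_isOpen_lt_of_lt E (ENNReal.ofReal ε')
    (by rw [hE0]; exact ENNReal.ofReal_pos.2 hε')
  have hUfin : volume U ≠ ⊤ := (hUvol.trans ENNReal.ofReal_lt_top).ne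
  set h : ℝ → ℝ := fun x => (volume (U ∩ Set.Ioc a x)).toReal with hh_def
  have hfin : ∀ x, volume (U ∩ Set.Ioc a x) ≠ ⊤ :=
    fun x => ((measure_mono Set.inter_subset_left).trans_lt (lt_top_iff_ne_top.2 hUfin)).ne
  have hmono : ∀ x y : ℝ, x ≤ y → h x ≤ h y := by
    intro x y hxy
    exact ENNReal.toReal_mono (hfin y)
      (measure_mono (Set.inter_subset_inter_right _ (Set.Ioc_subset_Ioc_right hxy)))
  have hlip_h : ∀ x y : ℝ, x ≤ y → h y - h x ≤ y - x := by
    intro x y hxy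
    have hsub : U ∩ Set.Ioc a y ⊆ (U ∩ Set.Ioc a x) ∪ Set.Ioc x y := by
      intro w ⟨hw1, hw2⟩
      rcases le_or_gt w x with hwx | hwx
      · exact Or.inl ⟨hw1, hw2.1, hwx⟩
      · exact Or.inr ⟨hwx, hw2.2⟩
    have h1 : volume (U ∩ Set.Ioc a y) ≤ volume (U ∩ Set.Ioc a x) + ENNReal.ofReal (y - x) := by
      calc volume (U ∩ Set.Ioc a y) ≤ volume ((U ∩ Set.Ioc a x) ∪ Set.Ioc x y) := measure_mono hsub
        _ ≤ volume (U ∩ Set.Ioc a x) + volume (Set.Ioc x y) := measure_union_le _ _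
        _ = volume (U ∩ Set.Ioc a x) + ENNReal.ofReal (y - x) := by rw [Real.volume_Ioc]
    have := ENNReal.toReal_mono (by
        exact ENNReal.add_ne_top.2 ⟨hfin x, ENNReal.ofReal_ne_top⟩) h1
    rw [ENNReal.toReal_add (hfin x) ENNReal.ofReal_ne_top,
      ENNReal.toReal_ofReal (by linarith)] at this
    simp only [hh_def] at *
    linarith
  -- g and its continuity on [a,b]
  set g : ℝ → ℝ := fun x => f x + (L + 1) * h x + ε * x with hg_def
  have hgcont : ContinuousOn g (Set.Icc a b) := by
    have hf : ContinuousOn f (Set.Icc a b) := by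
      refine (LipschitzOnWith.of_dist_le_mul (K := Real.toNNReal L) ?_).continuousOn
      intro p hp q hq
      rw [Real.dist_eq, Real.dist_eq, Real.coe_toNNReal L hL]
      exact hlip p hp q hq
    have hhl : LipschitzWith 1 h := by
      refine LipschitzWith.of_dist_le_mul (fun p q => ?_)
      rw [Real.dist_eq, Real.dist_eq, NNReal.coe_one, one_mul]
      rcases le_total p q with hpq | hpq
      · rw [abs_of_nonpos (by linarith [hmono p q hpq]), abs_of_nonpos (by linarith)]
        linarith [hlip_h p q hpq]
      · rw [abs_of_nonneg (by linarith [hmono q p hpq]), abs_of_nonneg (by linarith)]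
        linarith [hlip_h q p hpq]
    exact (hf.add ((continuous_const.mul hhl.continuous).continuousOn)).add
      ((continuous_const.mul continuous_id).continuousOn)
  -- real induction
  have hmain : Set.Icc a b ⊆ {x | g a ≤ g x} := by
    refine IsClosed.Icc_subset_of_forall_exists_gt ?_ (by simp) ?_
    · rw [Set.inter_comm]
      exact hgcont.preimage_isClosed_of_isClosed isClosed_Icc isClosed_Ici
    · rintro x ⟨hxs, hxI⟩ y hy
      by_cases hxU : x ∈ U
      · -- inside the open set: use the Lipschitz bound and the full growth of h
        obtain ⟨δ, hδpos, hball⟩ := Metric.isOpen_iff.1 hUopen x hxU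
        set z : ℝ := min (x + δ/2) (min y b) with hz_def
        have hxz : x < z := lt_min (by linarith) (lt_min hy hxI.2)
        have hzy : z ≤ y := le_trans (min_le_right _ _) (min_le_left _ _)
        have hzb : z ≤ b := le_trans (min_le_right _ _) (min_le_right _ _)
        have hza : a ≤ z := le_trans hxI.1 hxz.le
        have hIU : Set.Ioc x z ⊆ U := by
          intro w hw
          apply hball
          rw [Metric.mem_ball, Real.dist_eq, abs_of_pos (by linarith [hw.1])]
          have : z ≤ x + δ/2 := min_le_left _ _
          linarith [hw.2]
        have hhz : h z - h x = z - x := by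
          have h1 : U ∩ Set.Ioc a z = (U ∩ Set.Ioc a x) ∪ Set.Ioc x z := by
            apply Set.Subset.antisymm
            · intro w ⟨hw1, hw2⟩
              rcases le_or_gt w x with hwx | hwx
              · exact Or.inl ⟨hw1, hw2.1, hwx⟩
              · exact Or.inr ⟨hwx, hw2.2⟩
            · rintro w (⟨hw1, hw2⟩ | hw)
              · exact ⟨hw1, hw2.1, hw2.2.trans hxz.le⟩
              · exact ⟨hIU hw, lt_of_le_of_lt hxI.1 hw.1, hw.2⟩
          have hdisj : Disjoint (U ∩ Set.Ioc a x) (Set.Ioc x z) := by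
            refine Set.disjoint_left.2 ?_
            rintro w ⟨_, _, hw2⟩ hw3
            exact absurd hw3.1 (not_lt.2 hw2)
          have := measure_union (μ := (volume : Measure ℝ)) hdisj measurableSet_Ioc
          rw [← h1] at this
          simp only [hh_def]
          rw [this, ENNReal.toReal_add (hfin x) (by rw [Real.volume_Ioc]; exact ENNReal.ofReal_ne_top),
            Real.volume_Ioc, ENNReal.toReal_ofReal (by linarith)]
          ring
        refine ⟨z, ?_, hxz, hzy⟩
        have hflip : f x - f z ≤ L * (z - x) := by
          have := hlip x ⟨hxI.1, hxI.2.le⟩ z ⟨hza, hzb⟩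
          rw [abs_sub_comm, abs_of_nonpos (by linarith : x - z ≤ 0)] at this
          calc f x - f z ≤ |f z - f x| := by rw [abs_sub_comm]; exact le_abs_self _
            _ ≤ L * (z - x) := by rw [abs_sub_comm] at this ⊢; linarith [this]
        show g a ≤ g z
        have : g z - g x = (f z - f x) + (L + 1) * (h z - h x) + ε * (z - x) := by
          simp only [hg_def]; ring
        have hgz : g x ≤ g z := by
          rw [hhz] at this
          nlinarith [hε, hxz]
        exact le_trans hxs hgz
      · -- good point: use the slope condition with ε
        have hxE : x ∉ E := fun hc => hxU (hEU hc)
        have hgood : ∀ ε0 : ℝ, 0 < ε0 →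
            ∀ᶠ w in nhdsWithin x (Set.Ioi x), f x - ε0 * (w - x) ≤ f w := by
          have hP : x ∈ Set.Ico a b → ∀ ε0 : ℝ, 0 < ε0 →
              ∀ᶠ w in nhdsWithin x (Set.Ioi x), f x - ε0 * (w - x) ≤ f w := by
            by_contra hc
            exact hxE hc
          exact hP hxI
        have h1 := hgood ε hε
        have h2 : Set.Ioc x (min y b) ∈ nhdsWithin x (Set.Ioi x) :=
          Ioc_mem_nhdsGT_of_mem ⟨le_refl x, lt_min hy hxI.2⟩
        obtain ⟨z, hz1, hz2⟩ := (h1.and h2).exists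
        refine ⟨z, ?_, hz2.1, hz2.2.trans (min_le_left _ _)⟩
        show g a ≤ g z
        have hzx : x < z := hz2.1
        have hgz : g x ≤ g z := by
          have hhm := hmono x z hzx.le
          have : f x - ε * (z - x) ≤ f z := hz1
          simp only [hg_def]
          nlinarith
        exact le_trans hxs hgz
  -- conclude
  have hgb : g a ≤ g b := hmain ⟨hab, le_refl b⟩
  have hha : h a = 0 := by
    simp only [hh_def, Set.Ioc_self, Set.inter_empty, measure_empty, ENNReal.toReal_zero]
  have hhb : h b ≤ ε' := by
    have h1 : volume (U ∩ Set.Ioc a b) ≤ ENNReal.ofReal ε' :=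
      le_trans (measure_mono Set.inter_subset_left) hUvol.le
    calc h b ≤ (ENNReal.ofReal ε').toReal := ENNReal.toReal_mono ENNReal.ofReal_ne_top h1
      _ = ε' := ENNReal.toReal_ofReal hε'.le
  have hba : b - a ≠ 0 := ne_of_gt (by linarith)
  have hεba : ε * (b - a) = δ / 2 := by
    rw [hε_def]; field_simp
  have : f a ≤ f b + (L + 1) * (h b - h a) + ε * (b - a) := by
    simp only [hg_def] at hgb; linarith
  rw [hha, sub_zero] at this
  have h2 : (L + 1) * h b ≤ (L + 1) * ε' := by nlinarith
  have hL1 : L + 1 ≠ 0 := ne_of_gt (by linarith)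
  have h3 : (L + 1) * ε' = δ / 2 := by rw [hε'_def]; field_simp
  linarith

lemma ev_min {ι : Type*} [Fintype ι] [Nonempty ι] (u : ι → ℝ → ℝ) (dd : ι → ℝ) (s : ℝ)
    (hder : ∀ k, HasDerivAt (u k) (dd k) s)
    (hpos : ∀ k, (∀ l, u k s ≤ u l s) → 0 ≤ dd k) {ε : ℝ} (hε : 0 < ε) :
    ∀ᶠ y in nhdsWithin s (Set.Ioi s),
      (Finset.univ.inf' Finset.univ_nonempty (fun k => u k s)) - ε * (y - s) ≤
        Finset.univ.inf' Finset.univ_nonempty (fun k => u k y) := by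
  set m : ℝ → ℝ := fun y => Finset.univ.inf' Finset.univ_nonempty (fun k => u k y) with hm
  have hall : ∀ k : ι, ∀ᶠ y in nhdsWithin s (Set.Ioi s), m s - ε * (y - s) ≤ u k y := by
    intro k
    by_cases hk : ∀ l, u k s ≤ u l s
    · have h1 := ev_slope (hder k) (hpos k hk) hε
      have hms : m s ≤ u k s := Finset.inf'_le _ (Finset.mem_univ k)
      filter_upwards [h1] with y hy
      linarith
    · push_neg at hk
      obtain ⟨l, hl⟩ := hk
      have hms : m s < u k s :=
        lt_of_le_of_lt (Finset.inf'_le _ (Finset.mem_univ l)) hl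
      have hc : ContinuousAt (u k) s := (hder k).continuousAt
      have h2 : ∀ᶠ y in nhds s, u k y ∈ Set.Ioi (m s) := hc (Ioi_mem_nhds hms)
      filter_upwards [nhdsWithin_le_nhds h2, self_mem_nhdsWithin] with y hy hy'
      have : (0:ℝ) < y - s := sub_pos.2 hy'
      nlinarith [hy.out]
  have := eventually_all.2 hall
  filter_upwards [this] with y hy
  exact Finset.le_inf' _ _ (fun k _ => hy k)

lemma abs_exp_sub_exp {p q M : ℝ} (hp : p ≤ M) (hq : q ≤ M) :
    |Real.exp p - Real.exp q| ≤ Real.exp M * |p - q| := by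
  wlog hpq : q ≤ p generalizing p q
  · rw [abs_sub_comm, abs_sub_comm p q]; exact this hq hp (le_of_not_ge hpq)
  rw [abs_of_nonneg (by linarith [Real.exp_le_exp.2 hpq] : (0:ℝ) ≤ Real.exp p - Real.exp q),
    abs_of_nonneg (by linarith : (0:ℝ) ≤ p - q)]
  have h1 : Real.exp (q - p) ≥ 1 + (q - p) := by linarith [Real.add_one_le_exp (q - p)]
  have h2 : Real.exp (q - p) * Real.exp p = Real.exp q := by
    rw [← Real.exp_add]; ring_nf
  have h3 : Real.exp p ≤ Real.exp M := Real.exp_le_exp.2 hp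
  nlinarith [Real.exp_pos p, Real.exp_pos q]

lemma sq_le_imp {p q : ℝ} (hp : 0 ≤ p) (hq : 0 ≤ q) (h : p^2 ≤ q^2) : p ≤ q := by
  nlinarith


lemma le_mDiam {N d : ℕ} (hN : 1 ≤ N) (x : Fin N → EuclideanSpace ℝ (Fin d)) (k l : Fin N) :
    ‖x k - x l‖ ≤ mDiam x := by
  haveI : Nonempty (Fin N) := ⟨⟨0, hN⟩⟩
  have h1 : ‖x k - x l‖ ≤ ⨆ j, ‖x k - x j‖ :=
    le_ciSup (f := fun j => ‖x k - x j‖) (Set.Finite.bddAbove (Set.finite_range _)) l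
  exact h1.trans (le_ciSup (f := fun i => ⨆ j, ‖x i - x j‖)
    (Set.Finite.bddAbove (Set.finite_range _)) k)

lemma inf'_lip {ι : Type*} [Fintype ι] [Nonempty ι] {u : ι → ℝ → ℝ} {L y z : ℝ}
    (h : ∀ k, |u k y - u k z| ≤ L * |y - z|) :
    |Finset.univ.inf' Finset.univ_nonempty (fun k => u k y) -
      Finset.univ.inf' Finset.univ_nonempty (fun k => u k z)| ≤ L * |y - z| := by
  rw [abs_sub_le_iff]
  constructor
  · obtain ⟨k, _, hk⟩ := Finset.exists_mem_eq_inf' (Finset.univ_nonempty) (fun k => u k z)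
    have h1 : Finset.univ.inf' Finset.univ_nonempty (fun k => u k y) ≤ u k y :=
      Finset.inf'_le _ (Finset.mem_univ k)
    have := abs_le.1 (h k)
    rw [hk]
    linarith [this.1, this.2]
  · obtain ⟨k, _, hk⟩ := Finset.exists_mem_eq_inf' (Finset.univ_nonempty) (fun k => u k y)
    have h1 : Finset.univ.inf' Finset.univ_nonempty (fun k => u k z) ≤ u k z :=
      Finset.inf'_le _ (Finset.mem_univ k)
    have := abs_le.1 (h k)
    rw [hk]
    linarith [this.1, this.2]

lemma hasDerivAt_inner_const {E : Type*} [NormedAddCommGroup E] [InnerProductSpace ℝ E]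
    {f : ℝ → E} {f' : E} {σ : ℝ} (hf : HasDerivAt f f' σ) (v : E) :
    HasDerivAt (fun τ => (inner ℝ (f τ) v : ℝ)) (inner ℝ f' v) σ := by
  have h := hf.inner (𝕜 := ℝ) (hasDerivAt_const σ v)
  simpa using h

lemma lipOn_weaken {E : Type*} [PseudoEMetricSpace E] {K K' : NNReal} {f : ℝ → E} {s : Set ℝ}
    (h : LipschitzOnWith K f s) (hk : K ≤ K') : LipschitzOnWith K' f s :=
  fun _ hx _ hy => le_trans (h hx hy) (mul_le_mul_left (ENNReal.coe_le_coe.2 hk) _)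

set_option maxHeartbeats 1000000 in
lemma diam_bound {N d : ℕ} (hN : 1 ≤ N) (a : Fin N → Fin N → ℝ → ℝ) (φ : ℝ → ℝ)
    (ha : ValidSignal N a) (hφ : ValidKernel φ)
    (x : Fin N → ℝ → EuclideanSpace ℝ (Fin d)) (hx : IsMASol a φ x) :
    ∀ s : ℝ, 0 ≤ s → ∀ k l : Fin N, ‖x k s - x l s‖ ≤ mDiam (fun i => x i 0) := by
  intro s0 hs0 k l
  haveI hne : Nonempty (Fin N) := ⟨⟨0, hN⟩⟩
  set D0 : ℝ := mDiam (fun i => x i 0) with hD0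
  have hD0nn : 0 ≤ D0 := by
    have := le_mDiam hN (fun i => x i 0) k k
    simpa using this
  rcases eq_or_lt_of_le hs0 with rfl | hs0'
  · exact le_mDiam hN (fun i => x i 0) k l
  -- common Lipschitz constant
  set K : NNReal := Finset.univ.sup (fun i => (hx.1 i s0 hs0').choose) with hK
  have hKge : ∀ i : Fin N, (hx.1 i s0 hs0').choose ≤ K :=
    fun i => Finset.le_sup (f := fun i => (hx.1 i s0 hs0').choose) (Finset.mem_univ i)
  have hKl : ∀ i : Fin N, LipschitzOnWith K (x i) (Set.Icc 0 s0) :=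
    fun i => lipOn_weaken ((hx.1 i s0 hs0').choose_spec) (hKge i)
  have hKd : ∀ i : Fin N, ∀ y ∈ Set.Icc (0:ℝ) s0, ∀ z ∈ Set.Icc (0:ℝ) s0,
      ‖x i y - x i z‖ ≤ (K : ℝ) * |y - z| := by
    intro i y hy z hz
    have := (hKl i).dist_le_mul y hy z hz
    rwa [dist_eq_norm, Real.dist_eq] at this
  -- bound on pairwise distances on [0, s0]
  set R : ℝ := D0 + 2 * (K : ℝ) * s0 with hR
  have hRnn : 0 ≤ R := by positivity
  have hRb : ∀ σ ∈ Set.Icc (0:ℝ) s0, ∀ p q : Fin N, ‖x p σ - x q σ‖ ≤ R := by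
    intro σ hσ p q
    have h1 : ‖x p σ - x q σ‖ ≤ ‖x p σ - x p 0‖ + ‖x p 0 - x q 0‖ + ‖x q 0 - x q σ‖ := by
      have := norm_sub_le_norm_sub_add_norm_sub (x p σ) (x p 0) (x q σ)
      have h2 := norm_sub_le_norm_sub_add_norm_sub (x p 0) (x q 0) (x q σ)
      linarith
    have h2 : ‖x p σ - x p 0‖ ≤ (K : ℝ) * s0 := by
      have := hKd p σ hσ 0 ⟨le_refl 0, hs0⟩
      rw [sub_zero, abs_of_nonneg hσ.1] at this
      nlinarith [this, hσ.2, mul_le_mul_of_nonneg_left hσ.2 K.coe_nonneg]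
    have h3 : ‖x q 0 - x q σ‖ ≤ (K : ℝ) * s0 := by
      have := hKd q 0 ⟨le_refl 0, hs0⟩ σ hσ
      rw [zero_sub, abs_neg, abs_of_nonneg hσ.1] at this
      nlinarith [this, hσ.2, mul_le_mul_of_nonneg_left hσ.2 K.coe_nonneg]
    have h4 : ‖x p 0 - x q 0‖ ≤ D0 := le_mDiam hN (fun i => x i 0) p q
    rw [hR]
    linarith
  -- apply the key lemma to the negated max of squared distances
  set fψ : ℝ → ℝ := fun σ =>
    Finset.univ.inf' Finset.univ_nonempty (fun p : Fin N × Fin N => -‖x p.1 σ - x p.2 σ‖^2)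
    with hfψ
  have hkey : fψ 0 ≤ fψ s0 := by
    refine key (L := 4 * R * (K : ℝ)) hs0 (by positivity) ?_ ?_
    · -- Lipschitz bound
      intro y hy z hz
      refine inf'_lip (u := fun (p : Fin N × Fin N) σ => -‖x p.1 σ - x p.2 σ‖^2) (fun p => ?_)
      have hA : ‖(x p.1 y - x p.2 y) - (x p.1 z - x p.2 z)‖ ≤ 2 * (K : ℝ) * |y - z| := by
        have h1 := hKd p.1 y hy z hz
        have h2 := hKd p.2 y hy z hz
        have h3 := norm_sub_le (x p.1 y - x p.1 z) (x p.2 y - x p.2 z)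
        have h4 : (x p.1 y - x p.2 y) - (x p.1 z - x p.2 z)
            = (x p.1 y - x p.1 z) - (x p.2 y - x p.2 z) := by abel
        rw [h4]
        linarith
      have hN1 := abs_norm_sub_norm_le (x p.1 y - x p.2 y) (x p.1 z - x p.2 z)
      have hb1 := hRb y hy p.1 p.2
      have hb2 := hRb z hz p.1 p.2
      have hn1 := norm_nonneg (x p.1 y - x p.2 y)
      have hn2 := norm_nonneg (x p.1 z - x p.2 z)
      have habs := abs_nonneg (y - z)
      rw [abs_le] at hN1 ⊢
      constructor <;> nlinarith [hN1.1, hN1.2]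
    · -- a.e. slope condition
      filter_upwards [hx.2] with σ hσ
      intro hσI ε hε
      have hσ0 : 0 ≤ σ := hσI.1
      have hders := hσ hσ0
      have hmax : ∀ p : Fin N × Fin N, HasDerivAt (fun τ => -‖x p.1 τ - x p.2 τ‖^2)
          (-((inner ℝ (x p.1 σ - x p.2 σ)
              ((N:ℝ)⁻¹ • ∑ m : Fin N, (a p.1 m σ * φ ‖x p.1 σ - x m σ‖) • (x m σ - x p.1 σ)
                - (N:ℝ)⁻¹ • ∑ m : Fin N, (a p.2 m σ * φ ‖x p.2 σ - x m σ‖) • (x m σ - x p.2 σ)) : ℝ)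
            + inner ℝ ((N:ℝ)⁻¹ • ∑ m : Fin N, (a p.1 m σ * φ ‖x p.1 σ - x m σ‖) • (x m σ - x p.1 σ)
                - (N:ℝ)⁻¹ • ∑ m : Fin N, (a p.2 m σ * φ ‖x p.2 σ - x m σ‖) • (x m σ - x p.2 σ))
              (x p.1 σ - x p.2 σ))) σ := by
        intro p
        have hA : HasDerivAt (fun τ => x p.1 τ - x p.2 τ)
            ((N:ℝ)⁻¹ • ∑ m : Fin N, (a p.1 m σ * φ ‖x p.1 σ - x m σ‖) • (x m σ - x p.1 σ)
              - (N:ℝ)⁻¹ • ∑ m : Fin N, (a p.2 m σ * φ ‖x p.2 σ - x m σ‖) • (x m σ - x p.2 σ)) σ :=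
          (hders p.1).sub (hders p.2)
        have h := (hA.inner (𝕜 := ℝ) hA).neg
        simp only [real_inner_self_eq_norm_sq] at h
        exact h
      refine ev_min _ _ σ hmax ?_ hε
      -- at a maximizing pair the derivative of the squared distance is nonpositive
      intro p hp
      set w : EuclideanSpace ℝ (Fin d) := x p.1 σ - x p.2 σ with hw
      set Vk : EuclideanSpace ℝ (Fin d) :=
        (N:ℝ)⁻¹ • ∑ m : Fin N, (a p.1 m σ * φ ‖x p.1 σ - x m σ‖) • (x m σ - x p.1 σ) with hVk
      set Vl : EuclideanSpace ℝ (Fin d) :=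
        (N:ℝ)⁻¹ • ∑ m : Fin N, (a p.2 m σ * φ ‖x p.2 σ - x m σ‖) • (x m σ - x p.2 σ) with hVl
      have hwmax : ∀ m m' : Fin N, ‖x m σ - x m' σ‖ ≤ ‖w‖ := by
        intro m m'
        have := hp (m, m')
        simp only at this
        refine sq_le_imp (norm_nonneg _) (norm_nonneg _) (by nlinarith [this])
      have hterm1 : ∀ m : Fin N,
          (a p.1 m σ * φ ‖x p.1 σ - x m σ‖) * (inner ℝ (x m σ - x p.1 σ) w : ℝ) ≤ 0 := by
        intro m
        have hc : 0 ≤ a p.1 m σ * φ ‖x p.1 σ - x m σ‖ :=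
          mul_nonneg ((ha p.1 m).2 σ hσ0).1 (hφ.2 _ (norm_nonneg _)).le
        have he : x m σ - x p.1 σ = (x m σ - x p.2 σ) - w := by rw [hw]; abel
        have h1 : (inner ℝ (x m σ - x p.1 σ) w : ℝ)
            = (inner ℝ (x m σ - x p.2 σ) w : ℝ) - (inner ℝ w w : ℝ) := by
          rw [he, inner_sub_left]
        have h2 : (inner ℝ (x m σ - x p.2 σ) w : ℝ) ≤ ‖x m σ - x p.2 σ‖ * ‖w‖ :=
          real_inner_le_norm _ _
        have h3 : (inner ℝ w w : ℝ) = ‖w‖^2 := real_inner_self_eq_norm_sq w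
        have h4 := hwmax m p.2
        have h5 := norm_nonneg w
        have hip : (inner ℝ (x m σ - x p.1 σ) w : ℝ) ≤ 0 := by nlinarith
        exact mul_nonpos_of_nonneg_of_nonpos hc hip
      have hterm2 : ∀ m : Fin N,
          0 ≤ (a p.2 m σ * φ ‖x p.2 σ - x m σ‖) * (inner ℝ (x m σ - x p.2 σ) w : ℝ) := by
        intro m
        have hc : 0 ≤ a p.2 m σ * φ ‖x p.2 σ - x m σ‖ :=
          mul_nonneg ((ha p.2 m).2 σ hσ0).1 (hφ.2 _ (norm_nonneg _)).le
        have he : x m σ - x p.2 σ = (x m σ - x p.1 σ) + w := by rw [hw]; abel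
        have h1 : (inner ℝ (x m σ - x p.2 σ) w : ℝ)
            = (inner ℝ (x m σ - x p.1 σ) w : ℝ) + (inner ℝ w w : ℝ) := by
          rw [he, inner_add_left]
        have h2 : -(inner ℝ (x m σ - x p.1 σ) w : ℝ) ≤ ‖x m σ - x p.1 σ‖ * ‖w‖ := by
          have := real_inner_le_norm (x p.1 σ - x m σ) w
          have he2 : x p.1 σ - x m σ = -(x m σ - x p.1 σ) := by abel
          rw [he2, inner_neg_left, norm_neg] at this
          linarith
        have h3 : (inner ℝ w w : ℝ) = ‖w‖^2 := real_inner_self_eq_norm_sq w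
        have h4 := hwmax m p.1
        have h5 := norm_nonneg w
        have hip : 0 ≤ (inner ℝ (x m σ - x p.2 σ) w : ℝ) := by nlinarith
        exact mul_nonneg hc hip
      -- combine
      have hNnn : (0:ℝ) ≤ (N:ℝ)⁻¹ := by positivity
      have hs1 : (inner ℝ Vk w : ℝ) ≤ 0 := by
        rw [hVk, real_inner_smul_left, sum_inner]
        refine mul_nonpos_of_nonneg_of_nonpos hNnn (Finset.sum_nonpos (fun m _ => ?_))
        rw [real_inner_smul_left]
        exact hterm1 m
      have hs2 : (0:ℝ) ≤ (inner ℝ Vl w : ℝ) := by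
        rw [hVl, real_inner_smul_left, sum_inner]
        refine mul_nonneg hNnn (Finset.sum_nonneg (fun m _ => ?_))
        rw [real_inner_smul_left]
        exact hterm2 m
      have hfin : (inner ℝ (Vk - Vl) w : ℝ) ≤ 0 := by
        rw [inner_sub_left]; linarith
      have hco : (inner ℝ w (Vk - Vl) : ℝ) = (inner ℝ (Vk - Vl) w : ℝ) :=
        real_inner_comm (Vk - Vl) w
      rw [hco]
      linarith
  -- conclude
  have h1 : fψ s0 ≤ -‖x k s0 - x l s0‖^2 :=
    Finset.inf'_le (f := fun p : Fin N × Fin N => -‖x p.1 s0 - x p.2 s0‖^2)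
      (Finset.mem_univ (k, l))
  have h2 : -D0^2 ≤ fψ 0 := by
    refine Finset.le_inf'_iff _ _ |>.2 (fun p _ => ?_)
    have := le_mDiam hN (fun i => x i 0) p.1 p.2
    have hn := norm_nonneg (x p.1 0 - x p.2 0)
    nlinarith
  refine sq_le_imp (norm_nonneg _) hD0nn (by nlinarith)

set_option maxHeartbeats 1000000 in
lemma aux_second {N d : ℕ} (hN : 1 ≤ N)
    (a : Fin N → Fin N → ℝ → ℝ) (φ : ℝ → ℝ)
    (ha : ValidSignal N a) (hφ : ValidKernel φ)
    (x : Fin N → ℝ → EuclideanSpace ℝ (Fin d)) (hx : IsMASol a φ x)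
    (i j : Fin N) (t : ℝ) (ht : 0 ≤ t)
    (hij : ‖x i t - x j t‖ = mDiam (fun k => x k t))
    (Cφ : ℝ) (hCφ : 0 < Cφ)
    (hbound : ∀ r ∈ Set.Icc 0 (mDiam (fun i => x i 0)), φ r ≤ Cφ) :
    ∀ k : Fin N, ∀ s : ℝ, t ≤ s →
      (inner ℝ (x k t - x j t) (x i t - x j t) : ℝ) * Real.exp (-Cφ * (s - t)) ≤
        (inner ℝ (x k s - x j t) (x i t - x j t) : ℝ) := by
  intro k s hts
  haveI hne : Nonempty (Fin N) := ⟨⟨0, hN⟩⟩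
  have hs0 : (0:ℝ) ≤ s := le_trans ht hts
  set v : EuclideanSpace ℝ (Fin d) := x i t - x j t with hv
  set u : Fin N → ℝ → ℝ := fun l σ => (inner ℝ (x l σ - x j t) v : ℝ) with hu
  have hNne : (N:ℝ) ≠ 0 := by positivity
  -- common Lipschitz constant on [0, s+1]
  have hr : (0:ℝ) < s + 1 := by linarith
  set K : NNReal := Finset.univ.sup (fun l => (hx.1 l (s+1) hr).choose) with hK
  have hKge : ∀ l : Fin N, (hx.1 l (s+1) hr).choose ≤ K :=
    fun l => Finset.le_sup (f := fun l => (hx.1 l (s+1) hr).choose) (Finset.mem_univ l)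
  have hKl : ∀ l : Fin N, LipschitzOnWith K (x l) (Set.Icc 0 (s+1)) :=
    fun l => lipOn_weaken ((hx.1 l (s+1) hr).choose_spec) (hKge l)
  have hKd : ∀ l : Fin N, ∀ y ∈ Set.Icc (0:ℝ) (s+1), ∀ z ∈ Set.Icc (0:ℝ) (s+1),
      ‖x l y - x l z‖ ≤ (K : ℝ) * |y - z| := by
    intro l y hy z hz
    have := (hKl l).dist_le_mul y hy z hz
    rwa [dist_eq_norm, Real.dist_eq] at this
  have hsub : ∀ {y : ℝ}, t ≤ y → y ≤ s → y ∈ Set.Icc (0:ℝ) (s+1) :=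
    fun hy1 hy2 => ⟨le_trans ht hy1, by linarith⟩
  -- two-point bound for u
  have hud : ∀ l : Fin N, ∀ y ∈ Set.Icc (0:ℝ) (s+1), ∀ z ∈ Set.Icc (0:ℝ) (s+1),
      |u l y - u l z| ≤ (K : ℝ) * ‖v‖ * |y - z| := by
    intro l y hy z hz
    have h1 : u l y - u l z = (inner ℝ (x l y - x l z) v : ℝ) := by
      rw [hu]
      simp only
      rw [← inner_sub_left]
      congr 1
      abel
    rw [h1]
    have h2 := abs_real_inner_le_norm (x l y - x l z) v
    have h3 := hKd l y hy z hz
    have h4 := norm_nonneg v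
    nlinarith [abs_nonneg (y - z)]
  -- derivatives of u at good times
  have huder : ∀ σ : ℝ, 0 ≤ σ →
      (∀ l, HasDerivAt (x l)
        ((N:ℝ)⁻¹ • ∑ m : Fin N, (a l m σ * φ ‖x l σ - x m σ‖) • (x m σ - x l σ)) σ) →
      ∀ l, HasDerivAt (u l)
        ((N:ℝ)⁻¹ * ∑ m : Fin N, (a l m σ * φ ‖x l σ - x m σ‖) * (u m σ - u l σ)) σ := by
    intro σ hσ0 hders l
    have h1 := hasDerivAt_inner_const ((hders l).sub_const (x j t)) v
    have h2 : (inner ℝ ((N:ℝ)⁻¹ • ∑ m : Fin N,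
        (a l m σ * φ ‖x l σ - x m σ‖) • (x m σ - x l σ)) v : ℝ)
        = (N:ℝ)⁻¹ * ∑ m : Fin N, (a l m σ * φ ‖x l σ - x m σ‖) * (u m σ - u l σ) := by
      rw [real_inner_smul_left, sum_inner]
      congr 1
      refine Finset.sum_congr rfl (fun m _ => ?_)
      rw [real_inner_smul_left]
      congr 1
      have he : x m σ - x l σ = (x m σ - x j t) - (x l σ - x j t) := by abel
      rw [he, inner_sub_left]
    rw [h2] at h1
    exact h1
  -- nonnegativity of u on [t, s]
  have hut : ∀ l : Fin N, 0 ≤ u l t := by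
    intro l
    have hw : ‖(x l t - x j t) - v‖ ≤ ‖v‖ := by
      have he : (x l t - x j t) - v = x l t - x i t := by rw [hv]; abel
      rw [he]
      calc ‖x l t - x i t‖ ≤ mDiam (fun m => x m t) := le_mDiam hN (fun m => x m t) l i
        _ = ‖v‖ := hij.symm
    have hsq := norm_sub_sq_real (x l t - x j t) v
    have h0 : u l t = (inner ℝ (x l t - x j t) v : ℝ) := rfl
    have h1 := norm_nonneg ((x l t - x j t) - v)
    have h2 := norm_nonneg (x l t - x j t)
    have h3 := norm_nonneg v
    rw [h0]
    nlinarith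
  -- nonnegativity of u for σ ∈ [t, s]
  have hnn : ∀ σ : ℝ, t ≤ σ → σ ≤ s → ∀ l, 0 ≤ u l σ := by
    intro σ hσ1 hσ2 l
    have hkeym : Finset.univ.inf' Finset.univ_nonempty (fun m => u m t) ≤
        Finset.univ.inf' Finset.univ_nonempty (fun m => u m σ) := by
      refine key (f := fun τ => Finset.univ.inf' Finset.univ_nonempty (fun m => u m τ))
        (L := (K:ℝ) * ‖v‖) hσ1 (by positivity) ?_ ?_
      · intro y hy z hz
        exact inf'_lip (u := u) (fun m =>
          hud m y (hsub hy.1 (hy.2.trans hσ2)) z (hsub hz.1 (hz.2.trans hσ2)))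
      · filter_upwards [hx.2] with τ hτ
        intro hτI ε hε
        have hτ0 : 0 ≤ τ := le_trans ht hτI.1
        have hds := huder τ hτ0 (hτ hτ0)
        refine ev_min u _ τ hds ?_ hε
        intro m hm
        refine mul_nonneg (by positivity) (Finset.sum_nonneg (fun m' _ => ?_))
        refine mul_nonneg (mul_nonneg ((ha m m').2 τ hτ0).1 (hφ.2 _ (norm_nonneg _)).le) ?_
        linarith [hm m']
    have h4 : Finset.univ.inf' Finset.univ_nonempty (fun m => u m σ) ≤ u l σ :=
      Finset.inf'_le _ (Finset.mem_univ l)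
    have h5 : (0:ℝ) ≤ Finset.univ.inf' Finset.univ_nonempty (fun m => u m t) :=
      Finset.le_inf'_iff _ _ |>.2 (fun m _ => hut m)
    linarith
  -- Gronwall step with integrating factor
  set F : ℝ → ℝ := fun σ => u k σ * Real.exp (Cφ * (σ - t)) with hF
  have hkeyF : F t ≤ F s := by
    set EM : ℝ := Real.exp (Cφ * (s - t)) with hEM
    have hEMpos : (0:ℝ) < EM := Real.exp_pos _
    set B : ℝ := |u k t| + (K:ℝ) * ‖v‖ * (s - t) with hB
    have hBnn : 0 ≤ B := add_nonneg (abs_nonneg _)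
      (mul_nonneg (by positivity) (by linarith))
    refine key (L := (K:ℝ)*‖v‖*EM + B*(EM*Cφ)) hts ?_ ?_ ?_
    · have h1 : (0:ℝ) ≤ (K:ℝ)*‖v‖*EM := by positivity
      have h2 : (0:ℝ) ≤ B*(EM*Cφ) := mul_nonneg hBnn (by positivity)
      linarith
    · -- two-point Lipschitz bound for F on [t, s]
      intro y hy z hz
      have hyz1 := hud k y (hsub hy.1 hy.2) z (hsub hz.1 hz.2)
      have hby : |u k y| ≤ B := by
        have h1 := hud k y (hsub hy.1 hy.2) t (hsub le_rfl hts)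
        have h2 := abs_sub_abs_le_abs_sub (u k y) (u k t)
        have h3 : |y - t| ≤ s - t := by
          rw [abs_of_nonneg (by linarith [hy.1])]; linarith [hy.2]
        have h4 : (0:ℝ) ≤ (K:ℝ) * ‖v‖ := by positivity
        rw [hB]
        nlinarith
      have hEy : Real.exp (Cφ*(y-t)) ≤ EM := by
        rw [hEM]; exact Real.exp_le_exp.2 (by nlinarith [hy.2])
      have hEz : Real.exp (Cφ*(z-t)) ≤ EM := by
        rw [hEM]; exact Real.exp_le_exp.2 (by nlinarith [hz.2])
      have hEd : |Real.exp (Cφ*(y-t)) - Real.exp (Cφ*(z-t))| ≤ EM * (Cφ * |y-z|) := by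
        have h1 := abs_exp_sub_exp (M := Cφ*(s-t)) (p := Cφ*(y-t)) (q := Cφ*(z-t))
          (by nlinarith [hy.2]) (by nlinarith [hz.2])
        have harg : |Cφ*(y-t) - Cφ*(z-t)| = Cφ * |y-z| := by
          rw [show Cφ*(y-t) - Cφ*(z-t) = Cφ * (y - z) by ring, abs_mul, abs_of_pos hCφ]
        rw [harg] at h1
        rw [hEM]
        linarith [h1]
      have hsplit : F y - F z = (u k y - u k z) * Real.exp (Cφ*(z-t))
          + u k y * (Real.exp (Cφ*(y-t)) - Real.exp (Cφ*(z-t))) := by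
        rw [hF]; ring
      rw [hsplit]
      have t1 : |(u k y - u k z) * Real.exp (Cφ*(z-t))| ≤ ((K:ℝ)*‖v‖*EM) * |y - z| := by
        rw [abs_mul, abs_of_pos (Real.exp_pos _)]
        have h0 := abs_nonneg (u k y - u k z)
        nlinarith [Real.exp_pos (Cφ*(z-t)), abs_nonneg (y-z)]
      have t2 : |u k y * (Real.exp (Cφ*(y-t)) - Real.exp (Cφ*(z-t)))| ≤ (B*(EM*Cφ)) * |y - z| := by
        rw [abs_mul]
        have h0 := abs_nonneg (Real.exp (Cφ*(y-t)) - Real.exp (Cφ*(z-t)))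
        nlinarith [abs_nonneg (u k y), abs_nonneg (y-z)]
      calc |(u k y - u k z) * Real.exp (Cφ*(z-t))
          + u k y * (Real.exp (Cφ*(y-t)) - Real.exp (Cφ*(z-t)))|
          ≤ |(u k y - u k z) * Real.exp (Cφ*(z-t))|
            + |u k y * (Real.exp (Cφ*(y-t)) - Real.exp (Cφ*(z-t)))| := abs_add_le _ _
        _ ≤ ((K:ℝ)*‖v‖*EM) * |y - z| + (B*(EM*Cφ)) * |y - z| := add_le_add t1 t2
        _ = ((K:ℝ)*‖v‖*EM + B*(EM*Cφ)) * |y - z| := by ring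
    · -- slope condition for F
      filter_upwards [hx.2] with σ hσ
      intro hσI ε hε
      have hσt : t ≤ σ := hσI.1
      have hσs : σ ≤ s := hσI.2.le
      have hσ0 : 0 ≤ σ := le_trans ht hσt
      have hdu := huder σ hσ0 (hσ hσ0) k
      have hexp : HasDerivAt (fun τ => Real.exp (Cφ*(τ-t))) (Real.exp (Cφ*(σ-t)) * Cφ) σ := by
        have hlin : HasDerivAt (fun τ : ℝ => Cφ*(τ-t)) Cφ σ := by
          simpa using ((hasDerivAt_id σ).sub_const t).const_mul Cφ
        exact hlin.exp
      have hdF := hdu.mul hexp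
      refine ev_slope hdF ?_ hε
      -- the derivative is nonnegative
      have hcb : ∀ m : Fin N, -(Cφ * u k σ) ≤ (a k m σ * φ ‖x k σ - x m σ‖) * (u m σ - u k σ) := by
        intro m
        set c : ℝ := a k m σ * φ ‖x k σ - x m σ‖ with hc
        have hc0 : 0 ≤ c := mul_nonneg ((ha k m).2 σ hσ0).1 (hφ.2 _ (norm_nonneg _)).le
        have hcC : c ≤ Cφ := by
          have hd1 := diam_bound hN a φ ha hφ x hx σ hσ0 k m
          have hφb := hbound ‖x k σ - x m σ‖ ⟨norm_nonneg _, hd1⟩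
          have ha1 := ((ha k m).2 σ hσ0).2
          have hφp := (hφ.2 ‖x k σ - x m σ‖ (norm_nonneg _)).le
          rw [hc]
          nlinarith
        have hum := hnn σ hσt hσs m
        have huk := hnn σ hσt hσs k
        nlinarith
      have hsum : -(Cφ * u k σ) ≤ (N:ℝ)⁻¹ * ∑ m : Fin N,
          (a k m σ * φ ‖x k σ - x m σ‖) * (u m σ - u k σ) := by
        have h1 : (N:ℝ) * -(Cφ * u k σ) ≤ ∑ m : Fin N,
            (a k m σ * φ ‖x k σ - x m σ‖) * (u m σ - u k σ) := by
          have := Finset.sum_le_sum (s := Finset.univ) (f := fun _ : Fin N => -(Cφ * u k σ))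
            (g := fun m => (a k m σ * φ ‖x k σ - x m σ‖) * (u m σ - u k σ))
            (fun m _ => hcb m)
          simpa [Finset.sum_const, Finset.card_univ, mul_comm] using this
        have hNpos : (0:ℝ) < (N:ℝ) := by positivity
        calc -(Cφ * u k σ) = (N:ℝ)⁻¹ * ((N:ℝ) * -(Cφ * u k σ)) := by
              field_simp
          _ ≤ (N:ℝ)⁻¹ * ∑ m : Fin N, (a k m σ * φ ‖x k σ - x m σ‖) * (u m σ - u k σ) := by
              exact mul_le_mul_of_nonneg_left h1 (by positivity)
      have huk := hnn σ hσt hσs k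
      nlinarith [Real.exp_pos (Cφ*(σ-t))]
  -- conclude
  have hFt : F t = u k t := by rw [hF]; simp
  rw [hFt] at hkeyF
  have hee : Real.exp (Cφ*(s-t)) * Real.exp (-Cφ*(s-t)) = 1 := by
    rw [← Real.exp_add]
    norm_num
  show u k t * Real.exp (-Cφ * (s - t)) ≤ u k s
  have hFs : F s = u k s * Real.exp (Cφ*(s-t)) := rfl
  rw [hFs] at hkeyF
  have hmul := mul_le_mul_of_nonneg_right hkeyF (Real.exp_pos (-Cφ*(s-t))).le
  have h2 : (u k s * Real.exp (Cφ*(s-t))) * Real.exp (-Cφ*(s-t)) = u k s := by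
    rw [mul_assoc, hee, mul_one]
  linarith

end AuxLemmas

/-- Grönwall-type scalar product estimates for a pair `(i,j)` realising the
diameter at time `t`: for every agent `k` and every `s ≥ t`, the scalar products against
`x_i(t) − x_j(t)` decay at most exponentially with rate `C_φ`. -/
theorem scalar_product_gronwall_bounds {N d : ℕ} (hN : 1 ≤ N)
    (a : Fin N → Fin N → ℝ → ℝ) (φ : ℝ → ℝ)
    (ha : ValidSignal N a) (hφ : ValidKernel φ)
    (x : Fin N → ℝ → EuclideanSpace ℝ (Fin d)) (hx : IsMASol a φ x)
    (i j : Fin N) (t : ℝ) (ht : 0 ≤ t)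
    (hij : ‖x i t - x j t‖ = mDiam (fun k => x k t))
    (Cφ : ℝ) (hCφ : 0 < Cφ)
    (hbound : ∀ r ∈ Set.Icc 0 (mDiam (fun i => x i 0)), φ r ≤ Cφ) :
    ∀ k : Fin N, ∀ s : ℝ, t ≤ s →
      (inner ℝ (x i t - x k t) (x i t - x j t) : ℝ) * Real.exp (-Cφ * (s - t)) ≤
        (inner ℝ (x i t - x k s) (x i t - x j t) : ℝ) ∧
      (inner ℝ (x k t - x j t) (x i t - x j t) : ℝ) * Real.exp (-Cφ * (s - t)) ≤
        (inner ℝ (x k s - x j t) (x i t - x j t) : ℝ) := by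
  intro k s hts
  constructor
  · have hij' : ‖x j t - x i t‖ = mDiam (fun k => x k t) := by
      rw [norm_sub_rev]; exact hij
    have h := aux_second hN a φ ha hφ x hx j i t ht hij' Cφ hCφ hbound k s hts
    have e1 : (inner ℝ (x i t - x k t) (x i t - x j t) : ℝ)
        = (inner ℝ (x k t - x i t) (x j t - x i t) : ℝ) := by
      rw [show x i t - x k t = -(x k t - x i t) from (neg_sub _ _).symm,
          show x i t - x j t = -(x j t - x i t) from (neg_sub _ _).symm, inner_neg_neg]
    have e2 : (inner ℝ (x i t - x k s) (x i t - x j t) : ℝ)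
        = (inner ℝ (x k s - x i t) (x j t - x i t) : ℝ) := by
      rw [show x i t - x k s = -(x k s - x i t) from (neg_sub _ _).symm,
          show x i t - x j t = -(x j t - x i t) from (neg_sub _ _).symm, inner_neg_neg]
    rw [e1, e2]
    exact h
  · exact aux_second hN a φ ha hφ x hx i j t ht hij Cφ hCφ hbound k s hts
end
end

section
/- Let x(·) be a solution of the nonlinear multiagent system, let t ≥ 0 and τ > 0, and let (i,j) be a pair of indices such that |x_i(s) − x_j(s)| = D(x(s)) for all s ∈ [t, t+τ] and such that the diameter s ↦ D(x(s)) is constant and positive on [t, t+τ]. Then both agents i and j are stationary on this window: x_i(s) = x_i(t) and x_j(s) = x_j(t) for all s ∈ [t, t+τ]. -/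
open MeasureTheory Finset

noncomputable section
open scoped RealInnerProductSpace

/-- Scalar constancy: a Lipschitz-type function on `[a,b]` with derivative `0` at almost
every point of `[a,b)` satisfies `h x ≤ h a` on `[a,b]`. -/
lemma scalar_le_of_ae_deriv_zero {a b K : ℝ} (hK : 0 ≤ K)
    {h : ℝ → ℝ} (hlip : ∀ x ∈ Set.Icc a b, ∀ y ∈ Set.Icc a b, |h x - h y| ≤ K * |x - y|)
    {S : Set ℝ} (hS : volume (Set.Ico a b \ S) = 0)
    (hd : ∀ s ∈ S ∩ Set.Ico a b, HasDerivAt h 0 s) :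
    ∀ x ∈ Set.Icc a b, h x ≤ h a := by
  intro x hx
  rcases le_or_gt x a with hxa | hax
  · have : x = a := le_antisymm hxa hx.1
    simp [this]
  refine le_of_forall_pos_le_add fun ε hε => ?_
  set ε₁ : ℝ := ε / (2 * (K + 1)) with hε₁def
  set ε₂ : ℝ := ε / (2 * (b - a + 1)) with hε₂def
  have hab : a < b := lt_of_lt_of_le hax hx.2
  have hba : 0 < b - a := sub_pos.2 hab
  have hε₁ : 0 < ε₁ := div_pos hε (by positivity)
  have hε₂ : 0 < ε₂ := div_pos hε (by positivity)
  -- choose an open set of small measure containing the bad points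
  obtain ⟨U, hUZ, hUopen, hUvol⟩ :=
    Set.exists_isOpen_lt_of_lt (Set.Ico a b \ S) (ENNReal.ofReal ε₁)
      (by rw [hS]; exact ENNReal.ofReal_pos.2 hε₁)
  have hUfin : ∀ s : Set ℝ, volume (U ∩ s) < ⊤ :=
    fun s => lt_of_le_of_lt (measure_mono Set.inter_subset_left)
      (hUvol.trans_le le_top)
  set m : ℝ → ℝ := fun y => (volume (U ∩ Set.Ioc a y)).toReal with hmdef
  have madd : ∀ {y z : ℝ}, a ≤ y → y ≤ z →
      m z = m y + (volume (U ∩ Set.Ioc y z)).toReal := by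
    intro y z hay hyz
    have : Set.Ioc a z = Set.Ioc a y ∪ Set.Ioc y z := (Set.Ioc_union_Ioc_eq_Ioc hay hyz).symm
    rw [hmdef]
    simp only
    rw [this, Set.inter_union_distrib_left, measure_union ?_ ?_, ENNReal.toReal_add
      (hUfin _).ne (hUfin _).ne]
    · exact (Set.Ioc_disjoint_Ioc_of_le le_rfl).mono
        Set.inter_subset_right Set.inter_subset_right
    · exact (hUopen.measurableSet).inter measurableSet_Ioc
  have mmono : ∀ {y z : ℝ}, a ≤ y → y ≤ z → m y ≤ m z := by
    intro y z hay hyz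
    rw [madd hay hyz]
    exact le_add_of_nonneg_right ENNReal.toReal_nonneg
  have mlip : ∀ {y z : ℝ}, a ≤ y → y ≤ z → m z - m y ≤ z - y := by
    intro y z hay hyz
    rw [madd hay hyz, add_sub_cancel_left]
    calc (volume (U ∩ Set.Ioc y z)).toReal ≤ (volume (Set.Ioc y z)).toReal := by
          apply ENNReal.toReal_mono (by simp) (measure_mono Set.inter_subset_right)
      _ = z - y := by rw [Real.volume_Ioc, ENNReal.toReal_ofReal (by linarith)]
  have hcontm : ContinuousOn m (Set.Icc a b) := by
    apply LipschitzOnWith.continuousOn (K := 1)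
    intro y hy z hz
    rw [edist_dist, edist_dist, Real.dist_eq, Real.dist_eq, ENNReal.coe_one, one_mul]
    apply ENNReal.ofReal_le_ofReal
    rcases le_total y z with hyz | hzy
    · rw [abs_of_nonpos (by have := mmono hy.1 hyz; linarith), abs_of_nonpos (by linarith)]
      have := mlip hy.1 hyz; linarith
    · rw [abs_of_nonneg (by have := mmono hz.1 hzy; linarith), abs_of_nonneg (by linarith)]
      have := mlip hz.1 hzy; linarith
  have hconth : ContinuousOn h (Set.Icc a b) := by
    apply LipschitzOnWith.continuousOn (K := K.toNNReal)
    intro y hy z hz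
    rw [edist_dist, edist_dist, Real.dist_eq, Real.dist_eq]
    calc ENNReal.ofReal |h y - h z| ≤ ENNReal.ofReal (K * |y - z|) :=
          ENNReal.ofReal_le_ofReal (hlip y hy z hz)
      _ = _ := by rw [ENNReal.ofReal_mul hK]; rfl
  -- the fencing argument
  have key : ∀ ⦃y : ℝ⦄, y ∈ Set.Icc a b → h y - K * m y ≤ h a + ε₂ * (y - a) := by
    apply image_le_of_liminf_slope_right_le_deriv_boundary
      (f := fun y => h y - K * m y) (B := fun y => h a + ε₂ * (y - a)) (B' := fun _ => ε₂)
    · exact hconth.sub (continuousOn_const.mul hcontm)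
    · simp [hmdef]
    · exact continuousOn_const.add (continuousOn_const.mul
        ((continuousOn_id).sub continuousOn_const))
    · intro y _
      simpa using (((hasDerivWithinAt_id y (Set.Ici y)).sub_const a).const_mul ε₂).const_add (h a)
    · intro y hy r hr
      have hyb : y < b := hy.2
      by_cases hyS : y ∈ S
      · -- differentiable point: slope of h tends to 0
        have hder := hd y ⟨hyS, hy⟩
        have htend : Filter.Tendsto (slope h y) (nhdsWithin y {y}ᶜ) (nhds 0) :=
          hasDerivAt_iff_tendsto_slope.1 hder
        have h2 : ∀ᶠ z in nhdsWithin y (Set.Ioi y), slope h y z < r := by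
          have : Filter.Tendsto (slope h y) (nhdsWithin y (Set.Ioi y)) (nhds 0) :=
            htend.mono_left (nhdsWithin_mono y (by intro z hz; exact ne_of_gt hz))
          exact this.eventually_lt_const (lt_of_le_of_lt (le_of_lt hε₂) hr)
        have h3 : ∀ᶠ z in nhdsWithin y (Set.Ioi y),
            slope (fun w => h w - K * m w) y z < r := by
          filter_upwards [h2, self_mem_nhdsWithin] with z hz (hz2 : y < z)
          have hmz : m y ≤ m z := mmono hy.1 hz2.le
          have hslope : slope (fun w => h w - K * m w) y z ≤ slope h y z := by
            rw [slope_def_field, slope_def_field]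
            have hnum : h z - K * m z - (h y - K * m y) ≤ h z - h y := by
              nlinarith [mul_le_mul_of_nonneg_left hmz hK]
            gcongr
          linarith
        exact h3.frequently
      · -- bad point: inside U, where m grows at unit rate
        have hyU : y ∈ U := hUZ ⟨hy, hyS⟩
        obtain ⟨δ, hδ, hball⟩ := Metric.isOpen_iff.1 hUopen y hyU
        have h4 : ∀ᶠ z in nhdsWithin y (Set.Ioi y),
            slope (fun w => h w - K * m w) y z < r := by
          have hmem : Set.Ioo y (min b (y + δ)) ∈ nhdsWithin y (Set.Ioi y) :=
            Ioo_mem_nhdsGT_of_mem ⟨le_refl y, lt_min hyb (by linarith)⟩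
          filter_upwards [hmem] with z hz
          have hzy : y < z := hz.1
          have hzb : z ≤ b := (hz.2.trans_le (min_le_left _ _)).le
          have hzδ : z < y + δ := hz.2.trans_le (min_le_right _ _)
          have hsub : Set.Ioc y z ⊆ U := by
            intro w hw
            apply hball
            rw [Metric.mem_ball, Real.dist_eq, abs_of_pos (by linarith [hw.1])]
            linarith [hw.2]
          have hmeq : m z - m y = z - y := by
            rw [madd hy.1 hzy.le, add_sub_cancel_left, Set.inter_eq_self_of_subset_right hsub,
              Real.volume_Ioc, ENNReal.toReal_ofReal (by linarith)]
          have hhlip : h z - h y ≤ K * (z - y) := by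
            have := hlip z ⟨by linarith [hy.1], hzb⟩ y ⟨hy.1, hyb.le⟩
            rw [abs_of_nonneg (by linarith : (0:ℝ) ≤ z - y)] at this
            calc h z - h y ≤ |h z - h y| := le_abs_self _
              _ ≤ K * (z - y) := this
          have : slope (fun w => h w - K * m w) y z ≤ 0 := by
            rw [slope_def_field]
            apply div_nonpos_of_nonpos_of_nonneg ?_ (by linarith)
            nlinarith [hmeq]
          linarith [lt_of_le_of_lt (le_of_lt hε₂) hr]
        exact h4.frequently
  have hkey := key hx
  have hmx : m x ≤ ε₁ := by
    have hle : volume (U ∩ Set.Ioc a x) ≤ ENNReal.ofReal ε₁ :=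
      le_trans (measure_mono Set.inter_subset_left) hUvol.le
    calc m x ≤ (ENNReal.ofReal ε₁).toReal := ENNReal.toReal_mono ENNReal.ofReal_ne_top hle
      _ = ε₁ := ENNReal.toReal_ofReal hε₁.le
  have h1 : K * m x ≤ ε / 2 := by
    have hm0 : 0 ≤ m x := ENNReal.toReal_nonneg
    have : K * m x ≤ K * ε₁ := mul_le_mul_of_nonneg_left hmx hK
    rw [hε₁def] at this
    calc K * m x ≤ K * (ε / (2 * (K + 1))) := this
      _ = (K * ε) / (2 * (K + 1)) := by ring
      _ ≤ ε / 2 := by rw [div_le_div_iff₀ (by positivity) (by norm_num)]; nlinarith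
  have h2 : ε₂ * (x - a) ≤ ε / 2 := by
    have : ε₂ * (x - a) ≤ ε₂ * (b - a) := mul_le_mul_of_nonneg_left (by linarith [hx.2]) hε₂.le
    rw [hε₂def] at this
    calc ε₂ * (x - a) ≤ ε / (2 * (b - a + 1)) * (b - a) := this
      _ ≤ ε / 2 := by rw [div_mul_eq_mul_div, div_le_div_iff₀ (by positivity) (by norm_num)]; nlinarith
  linarith

/-- Vector constancy: a Lipschitz curve into `ℝ^d` with a.e. zero derivative on a window
is constant there. -/
lemma const_of_ae_deriv_zero {d : ℕ} {a b : ℝ} {K : NNReal}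
    {f : ℝ → EuclideanSpace ℝ (Fin d)} (hlip : LipschitzOnWith K f (Set.Icc a b))
    {S : Set ℝ} (hS : volume (Set.Ico a b \ S) = 0)
    (hd : ∀ s ∈ S ∩ Set.Ico a b, HasDerivAt f 0 s) :
    ∀ x ∈ Set.Icc a b, f x = f a := by
  intro x hx
  have ha : a ∈ Set.Icc a b := ⟨le_refl a, le_trans hx.1 hx.2⟩
  set w : EuclideanSpace ℝ (Fin d) := f x - f a with hw
  have key : ⟪f x, w⟫ ≤ ⟪f a, w⟫ := by
    apply scalar_le_of_ae_deriv_zero (K := K * ‖w‖) (mul_nonneg K.coe_nonneg (norm_nonneg _))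
      (h := fun s => ⟪f s, w⟫) ?_ hS ?_ x hx
    · intro y hy z hz
      have h1 : |⟪f y, w⟫ - ⟪f z, w⟫| = |⟪f y - f z, w⟫| := by
        rw [inner_sub_left]
      rw [h1]
      calc |⟪f y - f z, w⟫| ≤ ‖f y - f z‖ * ‖w‖ := abs_real_inner_le_norm _ _
        _ ≤ (K * |y - z|) * ‖w‖ := by
            apply mul_le_mul_of_nonneg_right ?_ (norm_nonneg _)
            have h2 := hlip.dist_le_mul y hy z hz
            rwa [dist_eq_norm, Real.dist_eq] at h2
        _ = K * ‖w‖ * |y - z| := by ring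
    · intro s hs
      have := (hd s hs).inner ℝ (hasDerivAt_const s w)
      simpa using this
  have : ⟪f x - f a, w⟫ ≤ 0 := by rw [inner_sub_left]; linarith
  rw [← hw, real_inner_self_eq_norm_sq] at this
  have : ‖w‖ = 0 := by nlinarith [norm_nonneg w, sq_nonneg ‖w‖]
  have := norm_eq_zero.1 this
  rw [hw] at this
  exact sub_eq_zero.1 this
/-- if a fixed pair `(i,j)` realises the diameter throughout `[t, t+τ]` and
the diameter is constant and positive there, then the agents `i` and `j` are stationary
on this window. -/
theorem fixed_maximising_pair_stationary {N d : ℕ} (hN : 1 ≤ N)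
    (a : Fin N → Fin N → ℝ → ℝ) (φ : ℝ → ℝ)
    (ha : ValidSignal N a) (hφ : ValidKernel φ)
    (x : Fin N → ℝ → EuclideanSpace ℝ (Fin d)) (hx : IsMASol a φ x)
    (t τ : ℝ) (ht : 0 ≤ t) (hτ : 0 < τ) (i j : Fin N)
    (hmax : ∀ s ∈ Set.Icc t (t + τ), ‖x i s - x j s‖ = mDiam (fun k => x k s))
    (hconst : ∀ s ∈ Set.Icc t (t + τ), mDiam (fun k => x k s) = mDiam (fun k => x k t))
    (hpos : 0 < mDiam (fun k => x k t)) :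
    ∀ s ∈ Set.Icc t (t + τ), x i s = x i t ∧ x j s = x j t := by
  set D := mDiam (fun k => x k t) with hDdef
  have diam_le : ∀ (y : Fin N → EuclideanSpace ℝ (Fin d)) (k l : Fin N),
      ‖y k - y l‖ ≤ mDiam y := by
    intro y k l
    have h1 : ‖y k - y l‖ ≤ ⨆ j', ‖y k - y j'‖ :=
      le_ciSup (f := fun j' => ‖y k - y j'‖) (Set.Finite.bddAbove (Set.finite_range _)) l
    have h2 : (⨆ j', ‖y k - y j'‖) ≤ ⨆ i', ⨆ j', ‖y i' - y j'‖ :=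
      le_ciSup (f := fun i' => ⨆ j', ‖y i' - y j'‖) (Set.Finite.bddAbove (Set.finite_range _)) k
    exact h1.trans h2
  have hbnd : ∀ s ∈ Set.Icc t (t + τ), ∀ k l : Fin N, ‖x k s - x l s‖ ≤ D := fun s hs k l =>
    (diam_le (fun k => x k s) k l).trans_eq (hconst s hs)
  have hnormD : ∀ s ∈ Set.Icc t (t + τ), ‖x i s - x j s‖ = D := fun s hs =>
    (hmax s hs).trans (hconst s hs)
  set v : Fin N → ℝ → EuclideanSpace ℝ (Fin d) := fun k s =>
    (N : ℝ)⁻¹ • ∑ l : Fin N, (a k l s * φ ‖x k s - x l s‖) • (x l s - x k s) with hv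
  set S : Set ℝ := {s | s ∈ Set.Ioo t (t + τ) ∧ ∀ k, HasDerivAt (x k) (v k s) s} with hSdef
  have hSnull : volume (Set.Ico t (t + τ) \ S) = 0 := by
    have h0 := hx.2
    rw [ae_iff] at h0
    apply measure_mono_null ?_ (measure_union_null (measure_singleton t) h0)
    intro s hs
    rcases eq_or_ne s t with h | h
    · exact Or.inl (by simp [h])
    · right
      simp only [Set.mem_setOf_eq]
      intro hP
      apply hs.2
      have hs1 : s ∈ Set.Ioo t (t + τ) := ⟨lt_of_le_of_ne hs.1.1 (Ne.symm h), hs.1.2⟩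
      exact ⟨hs1, by simpa only [hv] using hP (le_trans ht hs1.1.le)⟩
  have hN0 : (0 : ℝ) < (N : ℝ) := by
    have : 0 < N := hN
    exact_mod_cast this
  have hNinv : (0 : ℝ) < (N : ℝ)⁻¹ := by positivity
  -- key pointwise argument on S
  have key : ∀ s ∈ S, v i s = 0 ∧ v j s = 0 := by
    rintro s ⟨hsIoo, hder⟩
    have hs0 : (0 : ℝ) ≤ s := le_trans ht hsIoo.1.le
    have hsIcc : s ∈ Set.Icc t (t + τ) := ⟨hsIoo.1.le, hsIoo.2.le⟩
    set u : EuclideanSpace ℝ (Fin d) := x i s - x j s with hu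
    have hunorm : ‖u‖ = D := hnormD s hsIcc
    have hD0 : (0 : ℝ) ≤ D := hunorm ▸ norm_nonneg u
    have huu : ⟪u, u⟫ = D * D := by rw [real_inner_self_eq_norm_mul_norm, hunorm]
    -- the squared distance is constant, hence has zero derivative
    have hgconst : HasDerivAt (fun σ => (⟪x i σ - x j σ, x i σ - x j σ⟫ : ℝ)) 0 s := by
      apply (hasDerivAt_const s (D * D)).congr_of_eventuallyEq
      filter_upwards [Ioo_mem_nhds hsIoo.1 hsIoo.2] with σ hσ
      rw [real_inner_self_eq_norm_mul_norm, hnormD σ ⟨hσ.1.le, hσ.2.le⟩]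
    have hgderiv : HasDerivAt (fun σ => (⟪x i σ - x j σ, x i σ - x j σ⟫ : ℝ))
        (⟪x i s - x j s, v i s - v j s⟫ + ⟪v i s - v j s, x i s - x j s⟫) s :=
      ((hder i).sub (hder j)).inner ℝ ((hder i).sub (hder j))
    have huniq : ⟪u, v i s - v j s⟫ + ⟪v i s - v j s, u⟫ = 0 := hgderiv.unique hgconst
    have hvij : ⟪v i s, u⟫ = ⟪v j s, u⟫ := by
      have h1 : ⟪u, v i s - v j s⟫ = ⟪v i s - v j s, u⟫ := real_inner_comm _ _
      have h2 : ⟪v i s - v j s, u⟫ = 0 := by linarith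
      rw [inner_sub_left] at h2
      linarith
    have hsplit : ∀ k, ⟪x k s - x i s, u⟫ = ⟪x k s - x j s, u⟫ - D * D := by
      intro k
      have h1 : x k s - x i s = (x k s - x j s) - u := by rw [hu]; abel
      rw [h1, inner_sub_left, huu]
    have hCS1 : ∀ k, ⟪x k s - x j s, u⟫ ≤ D * D := by
      intro k
      calc ⟪x k s - x j s, u⟫ ≤ ‖x k s - x j s‖ * ‖u‖ := real_inner_le_norm _ _
        _ ≤ D * D := by rw [hunorm]; exact mul_le_mul_of_nonneg_right (hbnd s hsIcc k j) hD0
    have hCS2 : ∀ k, -(D * D) ≤ ⟪x k s - x i s, u⟫ := by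
      intro k
      have h3 : -⟪x k s - x i s, u⟫ ≤ D * D := by
        have hsym : ⟪x i s - x k s, u⟫ = -⟪x k s - x i s, u⟫ := by
          rw [← inner_neg_left]
          congr 1
          abel
        rw [← hsym]
        calc ⟪x i s - x k s, u⟫ ≤ ‖x i s - x k s‖ * ‖u‖ := real_inner_le_norm _ _
          _ ≤ D * D := by rw [hunorm]; exact mul_le_mul_of_nonneg_right (hbnd s hsIcc i k) hD0
      linarith
    have hpi : ∀ k, ⟪x k s - x i s, u⟫ ≤ 0 := fun k => by
      have := hCS1 k; rw [hsplit k]; linarith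
    have hqj : ∀ k, 0 ≤ ⟪x k s - x j s, u⟫ := fun k => by
      have := hCS2 k; have h2 := hsplit k; linarith
    -- Cauchy–Schwarz equality case
    have CSeq : ∀ w : EuclideanSpace ℝ (Fin d), ‖w‖ ≤ D → ⟪w, u⟫ = D * D → w = u := by
      intro w hwle hinner
      have hwge : D ≤ ‖w‖ := by
        have h2 := real_inner_le_norm w u
        rw [hunorm, hinner] at h2
        nlinarith
      have hwD : ‖w‖ = D := le_antisymm hwle hwge
      have heq : ⟪w, u⟫ = ‖w‖ * ‖u‖ := by rw [hwD, hunorm]; exact hinner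
      have h3 := inner_eq_norm_mul_iff_real.1 heq
      rw [hunorm, hwD] at h3
      exact smul_right_injective _ (ne_of_gt hpos) h3
    -- inner products of velocities with u
    have hviu : ⟪v i s, u⟫
        = (N : ℝ)⁻¹ * ∑ k : Fin N, (a i k s * φ ‖x i s - x k s‖) * ⟪x k s - x i s, u⟫ := by
      simp only [hv, real_inner_smul_left, sum_inner]
    have hvju : ⟪v j s, u⟫
        = (N : ℝ)⁻¹ * ∑ k : Fin N, (a j k s * φ ‖x j s - x k s‖) * ⟪x k s - x j s, u⟫ := by
      simp only [hv, real_inner_smul_left, sum_inner]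
    have hcoef : ∀ k l : Fin N, 0 ≤ a k l s * φ ‖x k s - x l s‖ := fun k l =>
      mul_nonneg ((ha k l).2 s hs0).1 (hφ.2 _ (norm_nonneg _)).le
    have htermi : ∀ k : Fin N, (a i k s * φ ‖x i s - x k s‖) * ⟪x k s - x i s, u⟫ ≤ 0 :=
      fun k => mul_nonpos_iff.2 (Or.inl ⟨hcoef i k, hpi k⟩)
    have htermj : ∀ k : Fin N, 0 ≤ (a j k s * φ ‖x j s - x k s‖) * ⟪x k s - x j s, u⟫ :=
      fun k => mul_nonneg (hcoef j k) (hqj k)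
    have hvi_le : ⟪v i s, u⟫ ≤ 0 := by
      rw [hviu]
      have hsum : ∑ k : Fin N, (a i k s * φ ‖x i s - x k s‖) * ⟪x k s - x i s, u⟫ ≤ 0 :=
        Finset.sum_nonpos fun k _ => htermi k
      nlinarith
    have hvj_ge : 0 ≤ ⟪v j s, u⟫ := by
      rw [hvju]
      have hsum : 0 ≤ ∑ k : Fin N, (a j k s * φ ‖x j s - x k s‖) * ⟪x k s - x j s, u⟫ :=
        Finset.sum_nonneg fun k _ => htermj k
      nlinarith
    have hvi0 : ⟪v i s, u⟫ = 0 := le_antisymm hvi_le (by rw [hvij]; exact hvj_ge)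
    have hvj0 : ⟪v j s, u⟫ = 0 := by rw [← hvij]; exact hvi0
    -- each term in the sums vanishes
    have hsumi : ∑ k : Fin N, (a i k s * φ ‖x i s - x k s‖) * ⟪x k s - x i s, u⟫ = 0 := by
      rw [hviu] at hvi0
      rcases mul_eq_zero.1 hvi0 with h | h
      · exact absurd h (ne_of_gt hNinv)
      · exact h
    have hsumj : ∑ k : Fin N, (a j k s * φ ‖x j s - x k s‖) * ⟪x k s - x j s, u⟫ = 0 := by
      rw [hvju] at hvj0
      rcases mul_eq_zero.1 hvj0 with h | h
      · exact absurd h (ne_of_gt hNinv)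
      · exact h
    have htermsi := (Finset.sum_eq_zero_iff_of_nonpos fun k _ => htermi k).1 hsumi
    have htermsj := (Finset.sum_eq_zero_iff_of_nonneg fun k _ => htermj k).1 hsumj
    constructor
    · -- v i s = 0
      simp only [hv]
      rw [Finset.sum_eq_zero, smul_zero]
      intro k _
      rcases mul_eq_zero.1 (htermsi k (Finset.mem_univ k)) with hc | hp
      · rw [hc, zero_smul]
      · have h1 : ⟪x k s - x j s, u⟫ = D * D := by
          have := hsplit k
          rw [hp] at this
          linarith
        have hkeq := CSeq (x k s - x j s) (hbnd s hsIcc k j) h1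
        have : x k s = x i s := by
          rw [hu] at hkeq
          exact sub_left_inj.1 hkeq
        rw [this, sub_self, smul_zero]
    · -- v j s = 0
      simp only [hv]
      rw [Finset.sum_eq_zero, smul_zero]
      intro k _
      rcases mul_eq_zero.1 (htermsj k (Finset.mem_univ k)) with hc | hq
      · rw [hc, zero_smul]
      · have h1 : ⟪x i s - x k s, u⟫ = D * D := by
          have h2 := hsplit k
          rw [hq] at h2
          have hsym : ⟪x i s - x k s, u⟫ = -⟪x k s - x i s, u⟫ := by
            rw [← inner_neg_left]
            congr 1
            abel
          rw [hsym]
          linarith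
        have hkeq := CSeq (x i s - x k s) (hbnd s hsIcc i k) h1
        have : x k s = x j s := by
          rw [hu] at hkeq
          have := sub_right_inj.1 hkeq
          exact this
        rw [this, sub_self, smul_zero]
  -- conclude via the constancy lemma
  obtain ⟨K, hK⟩ := hx.1 i (t + τ) (by linarith)
  obtain ⟨K', hK'⟩ := hx.1 j (t + τ) (by linarith)
  have hsub : Set.Icc t (t + τ) ⊆ Set.Icc 0 (t + τ) := Set.Icc_subset_Icc ht (le_refl _)
  have hi := const_of_ae_deriv_zero (hK.mono hsub) hSnull
    (fun s hs => by have h := hs.1.2 i; rwa [(key s hs.1).1] at h)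
  have hj := const_of_ae_deriv_zero (hK'.mono hsub) hSnull
    (fun s hs => by have h := hs.1.2 j; rwa [(key s hs.1).2] at h)
  exact fun s hs => ⟨hi s hs, hj s hs⟩
end
end

section
/- Fix τ > 0 and μ ∈ (0,1]. Let x(·) be a solution of the linear balanced multiagent system driven by a signal A(·) ∈ G_{λ₂}(τ,μ), and suppose that all agents are stationary on some window [t, t+τ], i.e. x_i(s) = x_i(t) for all s ∈ [t, t+τ] and all i. Then V(x(t)) = 0, i.e. all agents coincide at time t. -/
open MeasureTheory Finset

noncomputable section

/-- if all agents of a solution of the linear balanced system driven by a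
connectivity-persistent signal are stationary on a window `[t, t+τ]`, then the variance
vanishes at time `t`, i.e. all agents coincide. -/
theorem stationary_window_implies_consensus {N d : ℕ} (hN : 1 ≤ N)
    (τ μ : ℝ) (hτ : 0 < τ) (hμ : μ ∈ Set.Ioc (0 : ℝ) 1)
    (a : Fin N → Fin N → ℝ → ℝ) (ha : ConnectivityPersistent N d τ μ a)
    (x : Fin N → ℝ → EuclideanSpace ℝ (Fin d)) (hx : IsLinSol a x)
    (t : ℝ) (ht : 0 ≤ t)
    (hstat : ∀ i : Fin N, ∀ s ∈ Set.Icc t (t + τ), x i s = x i t) :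
    mVar (fun i => x i t) = 0 := by
  obtain ⟨hasig, hbal, hconn⟩ := ha
  have htτ : t < t + τ := by linarith
  set y : Fin N → EuclideanSpace ℝ (Fin d) := fun i => x i t with hy
  set B : Fin N → Fin N → ℝ := fun i j => ∫ s in t..t + τ, a i j s with hB
  -- integrability of the signals on the window
  have hInt : ∀ i j, IntervalIntegrable (a i j) volume t (t + τ) := by
    intro i j
    have hm : AEStronglyMeasurable (a i j)
        (volume.restrict (Set.uIoc t (t + τ))) := (hasig i j).1.aestronglyMeasurable
    refine (intervalIntegrable_const (c := (1 : ℝ))).mono_fun hm ?_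
    rw [Set.uIoc_of_le htτ.le]
    refine (ae_restrict_iff' measurableSet_Ioc).2 (ae_of_all _ fun s hs => ?_)
    have h0 : (0 : ℝ) ≤ s := le_trans ht hs.1.le
    have hmem := (hasig i j).2 s h0
    have : |a i j s| ≤ 1 := abs_le.2 ⟨by linarith [hmem.1], hmem.2⟩
    simpa [Real.norm_eq_abs] using this
  -- the derivative is zero a.e. on the open window
  have hzero : ∀ᵐ s : ℝ ∂(volume : Measure ℝ), s ∈ Set.Ioo t (t + τ) →
      ∀ i, ∑ j, a i j s • (y j - y i) = (0 : EuclideanSpace ℝ (Fin d)) := by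
    filter_upwards [hx.2] with s hs hsmem i
    have h0 : (0 : ℝ) ≤ s := le_trans ht hsmem.1.le
    have hder := hs h0 i
    have hconst : HasDerivAt (x i) 0 s := by
      have hev : x i =ᶠ[nhds s] fun _ => x i t := by
        filter_upwards [Ioo_mem_nhds hsmem.1 hsmem.2] with u hu
        exact hstat i u ⟨hu.1.le, hu.2.le⟩
      exact (hasDerivAt_const s (x i t)).congr_of_eventuallyEq hev
    have huniq := hder.unique hconst
    have hNne : ((N : ℝ))⁻¹ ≠ 0 := by
      have : (0 : ℝ) < N := by exact_mod_cast hN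
      positivity
    have hsum : ∑ j, a i j s • (x j s - x i s) = (0 : EuclideanSpace ℝ (Fin d)) := by
      rcases smul_eq_zero.1 huniq with h | h
      · exact absurd h hNne
      · exact h
    have hxs : ∀ j : Fin N, x j s = y j := fun j =>
      hstat j s ⟨hsmem.1.le, hsmem.2.le⟩
    simpa [hxs] using hsum
  have hne : ∀ᵐ s : ℝ ∂(volume : Measure ℝ), s ≠ t + τ := by
    refine ae_iff.2 ?_
    have : {s : ℝ | ¬ s ≠ t + τ} = {t + τ} := by ext u; simp [not_not]
    rw [this]; exact Real.volume_singleton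
  -- integrated equation: ∑_j B_{ij}(y_j − y_i) = 0
  have hBzero : ∀ i, ∑ j, B i j • (y j - y i) = (0 : EuclideanSpace ℝ (Fin d)) := by
    intro i
    have h1 : ∑ j, B i j • (y j - y i)
        = ∫ s in t..t + τ, ∑ j, a i j s • (y j - y i) := by
      rw [intervalIntegral.integral_finset_sum]
      · simp only [hB, intervalIntegral.integral_smul_const]
      · intro j _
        exact ⟨((hInt i j).1).smul_const _, ((hInt i j).2).smul_const _⟩
    rw [h1]
    have hcong : ∀ᵐ s : ℝ ∂(volume : Measure ℝ), s ∈ Set.uIoc t (t + τ) →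
        (∑ j, a i j s • (y j - y i)) = (0 : EuclideanSpace ℝ (Fin d)) := by
      rw [Set.uIoc_of_le htτ.le]
      filter_upwards [hzero, hne] with s hs hsne hmem
      exact hs ⟨hmem.1, lt_of_le_of_ne hmem.2 hsne⟩ i
    rw [intervalIntegral.integral_congr_ae hcong]
    simp
  -- the integrated matrix is balanced
  have hBbal : ∀ i, ∑ j, B i j = ∑ j, B j i := by
    intro i
    have h1 : ∑ j, B i j = ∫ s in t..t + τ, ∑ j, a i j s :=
      (intervalIntegral.integral_finset_sum (fun j _ => hInt i j)).symm
    have h2 : ∑ j, B j i = ∫ s in t..t + τ, ∑ j, a j i s :=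
      (intervalIntegral.integral_finset_sum (fun j _ => hInt j i)).symm
    rw [h1, h2]
    apply intervalIntegral.integral_congr_ae
    rw [Set.uIoc_of_le htτ.le]
    filter_upwards [hbal] with s hs hmem
    exact hs (le_trans ht hmem.1.le) i
  -- orthogonality: ∑_j B_{ij}⟪y_i, y_j⟫ = (∑_j B_{ij})‖y_i‖²
  have hfactA : ∀ i, ∑ j, B i j * (inner ℝ (y i) (y j) : ℝ)
      = (∑ j, B i j) * ‖y i‖ ^ 2 := by
    intro i
    have h0 := congrArg (fun v => (inner ℝ (y i) v : ℝ)) (hBzero i)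
    simp only [inner_sum, inner_smul_right, inner_sub_right, inner_zero_right] at h0
    have h0' : ∑ j, B i j * ((inner ℝ (y i) (y j) : ℝ) - (inner ℝ (y i) (y i) : ℝ)) = 0 := by
      simpa [mul_sub] using h0
    have hself : (inner ℝ (y i) (y i) : ℝ) = ‖y i‖ ^ 2 := real_inner_self_eq_norm_sq _
    have hsplit : ∑ j, B i j * (inner ℝ (y i) (y j) : ℝ)
        - ∑ j, B i j * (inner ℝ (y i) (y i) : ℝ) = 0 := by
      rw [← Finset.sum_sub_distrib]
      simpa [mul_sub] using h0'
    rw [sub_eq_zero.1 hsplit, ← Finset.sum_mul, hself]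
  -- the quadratic form vanishes
  have hE : ∑ i, ∑ j, B i j * ‖y i - y j‖ ^ 2 = 0 := by
    have hexp : ∀ i j : Fin N, ‖y i - y j‖ ^ 2
        = ‖y i‖ ^ 2 - 2 * (inner ℝ (y i) (y j) : ℝ) + ‖y j‖ ^ 2 := fun i j =>
      norm_sub_sq_real _ _
    have hT2 : ∑ i, ∑ j, B i j * ‖y j‖ ^ 2 = ∑ i, (∑ j, B i j) * ‖y i‖ ^ 2 := by
      rw [Finset.sum_comm]
      refine Finset.sum_congr rfl fun j _ => ?_
      rw [← Finset.sum_mul]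
      congr 1
      exact (hBbal j).symm
    have hT3 : ∑ i, ∑ j, B i j * (inner ℝ (y i) (y j) : ℝ)
        = ∑ i, (∑ j, B i j) * ‖y i‖ ^ 2 :=
      Finset.sum_congr rfl fun i _ => hfactA i
    calc ∑ i, ∑ j, B i j * ‖y i - y j‖ ^ 2
        = ∑ i, ∑ j, (B i j * ‖y i‖ ^ 2 - 2 * (B i j * (inner ℝ (y i) (y j) : ℝ))
            + B i j * ‖y j‖ ^ 2) := by
          refine Finset.sum_congr rfl fun i _ => Finset.sum_congr rfl fun j _ => ?_
          rw [hexp i j]; ring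
      _ = (∑ i, ∑ j, B i j * ‖y i‖ ^ 2)
            - 2 * (∑ i, ∑ j, B i j * (inner ℝ (y i) (y j) : ℝ))
            + ∑ i, ∑ j, B i j * ‖y j‖ ^ 2 := by
          simp [Finset.sum_add_distrib, Finset.sum_sub_distrib, Finset.mul_sum]
      _ = 0 := by
          rw [hT2, hT3]
          have : ∑ i, ∑ j, B i j * ‖y i‖ ^ 2 = ∑ i, (∑ j, B i j) * ‖y i‖ ^ 2 :=
            Finset.sum_congr rfl fun i _ => by rw [← Finset.sum_mul]
          rw [this]; ring
  -- conclude via the connectivity bound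
  have hμlam := hconn t ht
  have hvar_nonneg : 0 ≤ mVar y := by
    unfold mVar
    have hN0 : (0 : ℝ) ≤ (N : ℝ)⁻¹ := by positivity
    refine mul_nonneg hN0 (Finset.sum_nonneg fun i _ => by positivity)
  rcases eq_or_lt_of_le hvar_nonneg with h | hpos
  · exact h.symm
  · exfalso
    have hQ : (2 * (N : ℝ) ^ 2)⁻¹
        * ∑ i, ∑ j, (fun i j => τ⁻¹ * ∫ s in t..t + τ, a i j s) i j * ‖y i - y j‖ ^ 2
        = 0 := by
      have : ∑ i, ∑ j, (τ⁻¹ * B i j) * ‖y i - y j‖ ^ 2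
          = τ⁻¹ * ∑ i, ∑ j, B i j * ‖y i - y j‖ ^ 2 := by
        simp [Finset.mul_sum, mul_assoc]
      simp only [hB] at this ⊢
      rw [this, hE]
      ring
    have hsup : lambda2 d (fun i j => τ⁻¹ * ∫ s in t..t + τ, a i j s) ≤ 0 := by
      apply Real.sSup_nonpos
      intro lam hlam
      have hlamy := hlam y
      rw [hQ] at hlamy
      nlinarith
    have : μ ≤ 0 := le_trans hμlam hsup
    linarith [hμ.1]
end
end
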